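/- arXiv:2103.17140 — 11 statements merged into one kernel-verified Lean document; each statement's English description precedes it below -/
import Mathlib

section
/- For every even integer n ≥ 1 and every S ⊆ Z_n such that no k ∈ Z_n satisfies both k ∈ S and −k ∈ S, the oriented circulant graph C(n,S) is not a deeply critical oriented clique. -/
/-- An oriented graph: a directed graph whose arc relation is irreflexive and
antisymmetric (no loops, and never both arcs `xy` and `yx`). -/
structure OrientedGraph (V : Type) where
  adj : V → V → Prop
  irrefl : ∀ v, ¬ adj v v
  antisymm : ∀ u v, adj u v → ¬ adj v u

namespace OrientedGraph

variable {V : Type}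

/-- An oriented `k`-colouring of `G`. -/
def IsColoring (G : OrientedGraph V) {k : ℕ} (φ : V → Fin k) : Prop :=
  (∀ x y, G.adj x y → φ x ≠ φ y) ∧
  (∀ x y u v, G.adj x y → G.adj u v → φ x = φ v → φ y ≠ φ u)

/-- The oriented chromatic number: the least `k` admitting an oriented `k`-colouring. -/
noncomputable def chromNum (G : OrientedGraph V) : ℕ :=
  sInf {k : ℕ | ∃ φ : V → Fin k, G.IsColoring φ}

/-- `G` with the arc `xy` removed. -/
def deleteArc (G : OrientedGraph V) (x y : V) : OrientedGraph V where
  adj a b := G.adj a b ∧ ¬(a = x ∧ b = y)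
  irrefl v h := G.irrefl v h.1
  antisymm u v h h' := G.antisymm u v h.1 h'.1

/-- An absolute oriented clique: `χo(G) = |V(G)|`. -/
def IsAbsoluteClique (G : OrientedGraph V) : Prop :=
  G.chromNum = Nat.card V

/-- A deeply critical oriented graph: removing any arc drops `χo` by exactly 2. -/
def IsDeeplyCritical (G : OrientedGraph V) : Prop :=
  ∀ x y, G.adj x y → (G.deleteArc x y).chromNum = G.chromNum - 2

/-- A deeply critical oriented clique. -/
def IsDeeplyCriticalClique (G : OrientedGraph V) : Prop :=
  G.IsDeeplyCritical ∧ G.IsAbsoluteClique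

/-- An extending partition `X 0 ⊔ X 1 ⊔ X 2` of `G` (indices mod 3). -/
def IsExtendingPartition (G : OrientedGraph V) (X : Fin 3 → Set V) : Prop :=
  (∀ v : V, ∃! i : Fin 3, v ∈ X i) ∧
  (∀ i : Fin 3, ∀ u ∈ X (i + 1), ∀ v ∈ X i, ¬ G.adj u v) ∧
  (∀ i : Fin 3, ∀ u ∈ X i, ∃ v ∈ X (i + 1), {w | w ∈ X i ∧ G.adj w v} = {u}) ∧
  (∀ i : Fin 3, ∀ v ∈ X (i + 1), ∃ u ∈ X i, {w | w ∈ X (i + 1) ∧ G.adj u w} = {v})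

/-- An oriented graph is extendable when it admits an extending partition. -/
def Extendable (G : OrientedGraph V) : Prop :=
  ∃ X : Fin 3 → Set V, G.IsExtendingPartition X

/-- Induced subgraph on the vertices satisfying `P`. -/
def induce (G : OrientedGraph V) (P : V → Prop) : OrientedGraph {v // P v} where
  adj a b := G.adj a.1 b.1
  irrefl a := G.irrefl a.1
  antisymm a b h := G.antisymm a.1 b.1 h

end OrientedGraph

/-- The new vertex `xᵢ⁻` of the 6-extension (for `i ∈ Fin 3`, representing `X_{i+1}`). -/
abbrev xminus (i : Fin 3) : Fin 6 := ⟨2 * i.1, by omega⟩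

/-- The new vertex `xᵢ⁺` of the 6-extension. -/
abbrev xplus (i : Fin 3) : Fin 6 := ⟨2 * i.1 + 1, by omega⟩

/-- The arcs among the six new vertices:
`x₁⁻x₂⁺, x₁⁺x₂⁻, x₂⁻x₃⁺, x₂⁺x₃⁻, x₃⁻x₁⁺, x₃⁺x₁⁻`. -/
abbrev extraAdj (s t : Fin 6) : Prop :=
  ∃ i : Fin 3, (s = xminus i ∧ t = xplus (i + 1)) ∨ (s = xplus i ∧ t = xminus (i + 1))

lemma extra_irrefl : ∀ s : Fin 6, ¬ extraAdj s s := by decide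

lemma extra_antisymm : ∀ s t : Fin 6, extraAdj s t → ¬ extraAdj t s := by decide

/-- The 6-extension of `G` with respect to the partition `X`. -/
def sixExtension {V : Type} (G : OrientedGraph V) (X : Fin 3 → Set V) :
    OrientedGraph (V ⊕ Fin 6) where
  adj a b :=
    match a, b with
    | Sum.inl u, Sum.inl v => G.adj u v
    | Sum.inr s, Sum.inl v => ∃ i : Fin 3, s = xminus i ∧ v ∈ X i
    | Sum.inl u, Sum.inr s => ∃ i : Fin 3, s = xplus i ∧ u ∈ X i
    | Sum.inr s, Sum.inr t => extraAdj s t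
  irrefl v := by
    cases v with
    | inl u => exact G.irrefl u
    | inr s => exact extra_irrefl s
  antisymm a b h h' := by
    cases a with
    | inl u =>
      cases b with
      | inl v => exact G.antisymm u v h h'
      | inr s =>
        obtain ⟨i, hi, -⟩ := h
        obtain ⟨j, hj, -⟩ := h'
        have := congrArg Fin.val (hi.symm.trans hj)
        simp at this
        omega
    | inr s =>
      cases b with
      | inl v =>
        obtain ⟨i, hi, -⟩ := h
        obtain ⟨j, hj, -⟩ := h'
        have := congrArg Fin.val (hi.symm.trans hj)
        simp at this
        omega
      | inr t => exact extra_antisymm s t h h'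

/-- The 4-extension of `G`: the subgraph of the 6-extension induced by deleting
`x₁⁺` and `x₂⁻`. -/
def fourExtension {V : Type} (G : OrientedGraph V) (X : Fin 3 → Set V) :
    OrientedGraph {v : V ⊕ Fin 6 // v ≠ Sum.inr (xplus 0) ∧ v ≠ Sum.inr (xminus 1)} :=
  (sixExtension G X).induce _

/-- The 2-extension of `G`: the subgraph of the 6-extension induced by deleting
`x₁⁻`, `x₂⁺`, `x₃⁻` and `x₃⁺`. -/
def twoExtension {V : Type} (G : OrientedGraph V) (X : Fin 3 → Set V) :
    OrientedGraph {v : V ⊕ Fin 6 //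
      v ≠ Sum.inr (xminus 0) ∧ v ≠ Sum.inr (xplus 1) ∧
      v ≠ Sum.inr (xminus 2) ∧ v ≠ Sum.inr (xplus 2)} :=
  (sixExtension G X).induce _

/-- The oriented circulant graph `C(n, S)`: vertex set `ZMod n`, with an arc from `i`
to `j` whenever `j - i ∈ S`. -/
def circulant (n : ℕ) (S : Set (ZMod n)) (hS : ∀ k : ZMod n, k ∈ S → -k ∉ S) :
    OrientedGraph (ZMod n) where
  adj i j := j - i ∈ S
  irrefl i h := hS (i - i) h (by simpa using h)
  antisymm i j h h' := hS (j - i) h (by simpa [neg_sub] using h')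


section Aux

lemma exists_inj_coloring (n : ℕ) [NeZero n] (G : OrientedGraph (ZMod n)) :
    ∃ φ : ZMod n → Fin n, G.IsColoring φ := by
  obtain ⟨e⟩ : Nonempty (ZMod n ≃ Fin n) := ⟨Fintype.equivFinOfCardEq (ZMod.card n)⟩
  refine ⟨e, ?_, ?_⟩
  · intro a b hab heq
    have : a = b := e.injective heq
    exact G.irrefl b (this ▸ hab)
  · intro a b c d hab hcd heq hbc
    have had : a = d := e.injective heq
    have hbc' : b = c := e.injective hbc
    subst had; subst hbc'
    exact G.antisymm a b hab hcd

lemma pair_conn {n : ℕ} (hn : 2 ≤ n) (G : OrientedGraph (ZMod n)) (hchrom : G.chromNum = n)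
    {x y : ZMod n} (hxy : x ≠ y) :
    G.adj x y ∨ G.adj y x ∨ (∃ w, G.adj x w ∧ G.adj w y) ∨ (∃ w, G.adj y w ∧ G.adj w x) := by
  by_contra hcon
  obtain ⟨h1, hcon⟩ := not_or.mp hcon
  obtain ⟨h2, hcon⟩ := not_or.mp hcon
  obtain ⟨h3, h4⟩ := not_or.mp hcon
  haveI : NeZero n := ⟨by omega⟩
  obtain ⟨e⟩ : Nonempty (ZMod n ≃ Fin n) := ⟨Fintype.equivFinOfCardEq (ZMod.card n)⟩
  set f : ZMod n → ZMod n := (fun z => if z = y then x else z) with hf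
  have hfy : ∀ z, f z ≠ y := by
    intro z
    simp only [hf]
    split
    · exact fun hc => hxy hc
    · assumption
  have hfne : ∀ z, (e (f z)).val ≠ (e y).val := by
    intro z hc
    exact hfy z (e.injective (Fin.ext hc))
  set φ : ZMod n → Fin (n - 1) := (fun z =>
    ⟨if (e (f z)).val < (e y).val then (e (f z)).val else (e (f z)).val - 1, by
      have c1 := (e (f z)).isLt
      have c2 := (e y).isLt
      have c3 := hfne z
      split <;> omega⟩) with hphi
  have hφinj : ∀ z1 z2, φ z1 = φ z2 → f z1 = f z2 := by
    intro z1 z2 hz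
    have hv := congrArg Fin.val hz
    simp only [hphi] at hv
    have c1 := (e (f z1)).isLt
    have c2 := (e (f z2)).isLt
    have d1 := hfne z1
    have d2 := hfne z2
    have hval : (e (f z1)).val = (e (f z2)).val := by
      split at hv <;> split at hv <;> omega
    exact e.injective (Fin.ext hval)
  have hcases : ∀ z1 z2, f z1 = f z2 → z1 = z2 ∨ (z1 = x ∧ z2 = y) ∨ (z1 = y ∧ z2 = x) := by
    intro z1 z2 hc
    simp only [hf] at hc
    split_ifs at hc with e1 e2 e2
    · exact Or.inl (e1.trans e2.symm)
    · exact Or.inr (Or.inr ⟨e1, hc.symm⟩)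
    · exact Or.inr (Or.inl ⟨hc, e2⟩)
    · exact Or.inl hc
  have hcol : G.IsColoring φ := by
    constructor
    · intro a b hab heq
      rcases hcases a b (hφinj a b heq) with hc | ⟨ha, hb⟩ | ⟨ha, hb⟩
      · exact G.irrefl b (hc ▸ hab)
      · exact h1 (ha ▸ hb ▸ hab)
      · exact h2 (ha ▸ hb ▸ hab)
    · intro p q r t hpq hrt hpt hqr
      rcases hcases p t (hφinj p t hpt) with hc | ⟨ha, hb⟩ | ⟨ha, hb⟩ <;>
        rcases hcases q r (hφinj q r hqr) with hc' | ⟨ha', hb'⟩ | ⟨ha', hb'⟩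
      · rw [hc'] at hpq
        rw [← hc] at hrt
        exact G.antisymm p r hpq hrt
      · rw [ha'] at hpq
        rw [hb', ← hc] at hrt
        exact h4 ⟨p, hrt, hpq⟩
      · rw [ha'] at hpq
        rw [hb', ← hc] at hrt
        exact h3 ⟨p, hrt, hpq⟩
      · rw [ha] at hpq
        rw [← hc', hb] at hrt
        exact h3 ⟨q, hpq, hrt⟩
      · rw [ha, ha'] at hpq
        exact G.irrefl x hpq
      · rw [ha, ha'] at hpq
        exact h1 hpq
      · rw [ha] at hpq
        rw [← hc', hb] at hrt
        exact h4 ⟨q, hpq, hrt⟩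
      · rw [ha, ha'] at hpq
        exact h2 hpq
      · rw [ha, ha'] at hpq
        exact G.irrefl y hpq
  have hle : G.chromNum ≤ n - 1 := Nat.sInf_le ⟨φ, hcol⟩
  rw [hchrom] at hle
  omega

end Aux

/-- For every even `n ≥ 1` and every admissible `S ⊆ ZMod n`, the oriented
circulant graph `C(n, S)` is not a deeply critical oriented clique. -/
theorem stmt2 (n : ℕ) (hn : 1 ≤ n) (hev : Even n) (S : Set (ZMod n))
    (hS : ∀ k : ZMod n, k ∈ S → -k ∉ S) :
    ¬ (circulant n S hS).IsDeeplyCriticalClique := by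
  rintro ⟨hDC, hAC⟩
  haveI hNZ : NeZero n := ⟨by omega⟩
  obtain ⟨m, hm⟩ := hev
  have hn2 : 2 ≤ n := by omega
  set G := circulant n S hS with hG
  have hGadj : ∀ a b : ZMod n, G.adj a b ↔ b - a ∈ S := fun a b => Iff.rfl
  have hchrom : G.chromNum = n := by
    have h := hAC
    unfold OrientedGraph.IsAbsoluteClique at h
    rwa [Nat.card_eq_fintype_card, ZMod.card] at h
  have conn := fun (x y : ZMod n) (hxy : x ≠ y) => pair_conn hn2 G hchrom hxy
  -- the half element
  have h2h : (m : ZMod n) + (m : ZMod n) = 0 := by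
    have hcast : ((m + m : ℕ) : ZMod n) = 0 := by
      rw [← hm]; exact ZMod.natCast_self n
    push_cast at hcast
    exact hcast
  have hh0 : (m : ZMod n) ≠ 0 := by
    intro hc
    rw [ZMod.natCast_eq_zero_iff] at hc
    have := Nat.le_of_dvd (by omega) hc
    omega
  have hmS : (m : ZMod n) ∉ S := by
    intro hmem
    have hneg : -(m : ZMod n) = m := by linear_combination -h2h
    exact hS _ hmem (by rw [hneg]; exact hmem)
  -- get u v ∈ S with u + v = m
  obtain ⟨u, v, huS, hvS, huv⟩ :
      ∃ u v, u ∈ S ∧ v ∈ S ∧ u + v = (m : ZMod n) := by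
    rcases conn 0 (m : ZMod n) (fun hc => hh0 hc.symm) with ha | ha | ⟨w, hw1, hw2⟩ | ⟨w, hw1, hw2⟩
    · have hx := (hGadj _ _).mp ha
      rw [sub_zero] at hx
      exact absurd hx hmS
    · have hx := (hGadj _ _).mp ha
      rw [zero_sub] at hx
      have hneg : -(m : ZMod n) = m := by linear_combination -h2h
      rw [hneg] at hx
      exact absurd hx hmS
    · have hx1 := (hGadj _ _).mp hw1
      rw [sub_zero] at hx1
      exact ⟨w, (m : ZMod n) - w, hx1, (hGadj _ _).mp hw2, by ring⟩
    · have hx2 := (hGadj _ _).mp hw2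
      rw [zero_sub] at hx2
      refine ⟨-w, w - (m : ZMod n), hx2, (hGadj _ _).mp hw1, by linear_combination -h2h⟩
  have hu0 : u ≠ 0 := by
    rintro rfl
    exact hS 0 huS (by rw [neg_zero]; exact huS)
  have hadj0u : G.adj 0 u := (hGadj _ _).mpr (by rw [sub_zero]; exact huS)
  have hd := hDC 0 u hadj0u
  rw [hchrom] at hd
  set H := G.deleteArc 0 u with hH
  obtain ⟨φ, hφ⟩ : ∃ φ : ZMod n → Fin (n - 2), H.IsColoring φ := by
    have hne : {k : ℕ | ∃ ψ : ZMod n → Fin k, H.IsColoring ψ}.Nonempty :=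
      ⟨n, exists_inj_coloring n H⟩
    have hmem : H.chromNum ∈ {k : ℕ | ∃ ψ : ZMod n → Fin k, H.IsColoring ψ} :=
      Nat.sInf_mem hne
    rwa [hd] at hmem
  -- H arcs
  have hHadj : ∀ a b : ZMod n, G.adj a b → ¬(a = 0 ∧ b = u) → H.adj a b :=
    fun a b h1 h2 => ⟨h1, h2⟩
  -- no merged pair avoiding 0 and u
  have M : ∀ z1 z2 : ZMod n, z1 ≠ z2 → z1 ≠ 0 → z1 ≠ u → z2 ≠ 0 → z2 ≠ u →
      φ z1 ≠ φ z2 := by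
    intro z1 z2 h12 h10 h1u h20 h2u heq
    rcases conn z1 z2 h12 with ha | ha | ⟨w, hw1, hw2⟩ | ⟨w, hw1, hw2⟩
    · exact hφ.1 z1 z2 (hHadj _ _ ha (fun hc => h10 hc.1)) heq
    · exact hφ.1 z2 z1 (hHadj _ _ ha (fun hc => h20 hc.1)) heq.symm
    · exact hφ.2 z1 w w z2 (hHadj _ _ hw1 (fun hc => h10 hc.1))
        (hHadj _ _ hw2 (fun hc => h2u hc.2)) heq rfl
    · exact hφ.2 z2 w w z1 (hHadj _ _ hw1 (fun hc => h20 hc.1))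
        (hHadj _ _ hw2 (fun hc => h1u hc.2)) heq.symm rfl
  -- find b merged with u
  obtain ⟨b, hb0, hbu, hbφ⟩ : ∃ b, b ≠ 0 ∧ b ≠ u ∧ φ b = φ u := by
    by_contra hb
    push_neg at hb
    have hinj : Function.Injective (fun z : {z : ZMod n // z ≠ 0} => φ z.val) := by
      rintro ⟨z1, h10⟩ ⟨z2, h20⟩ hz
      simp only at hz
      apply Subtype.ext
      by_contra hne
      by_cases h1u : z1 = u
      · subst h1u
        have h2u : z2 ≠ z1 := fun hc => hne hc.symm
        exact hb z2 h20 h2u hz.symm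
      · by_cases h2u : z2 = u
        · subst h2u
          exact hb z1 h10 h1u hz
        · exact M z1 z2 hne h10 h1u h20 h2u hz
    have hle := Fintype.card_le_of_injective _ hinj
    rw [Fintype.card_fin] at hle
    have hcs : Fintype.card {z : ZMod n // z ≠ 0} = n - 1 := by
      rw [Fintype.card_subtype]
      have hfe : Finset.filter (fun z : ZMod n => z ≠ 0) Finset.univ
          = Finset.univ.erase 0 := by
        ext z
        simp [Finset.mem_erase]
      rw [hfe, Finset.card_erase_of_mem (Finset.mem_univ 0), Finset.card_univ, ZMod.card]
    omega
  -- -b ∈ S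
  have hub : u ≠ b := fun hc => hbu hc.symm
  have hnegb : -b ∈ S := by
    rcases conn u b hub with ha | ha | ⟨w, hw1, hw2⟩ | ⟨w, hw1, hw2⟩
    · exact absurd hbφ.symm (hφ.1 u b (hHadj _ _ ha (fun hc => hu0 hc.1)))
    · exact absurd hbφ (hφ.1 b u (hHadj _ _ ha (fun hc => hb0 hc.1)))
    · exact absurd rfl (hφ.2 u w w b (hHadj _ _ hw1 (fun hc => hu0 hc.1))
        (hHadj _ _ hw2 (fun hc => hbu hc.2)) hbφ.symm)
    · by_cases hw0 : w = 0
      · subst hw0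
        have hx := (hGadj _ _).mp hw1
        rwa [zero_sub] at hx
      · exact absurd rfl (hφ.2 b w w u (hHadj _ _ hw1 (fun hc => hb0 hc.1))
          (hHadj _ _ hw2 (fun hc => hw0 hc.1)) hbφ)
  -- b = -u
  have hbeq : b = -u := by
    by_contra hbne
    have harc1 : G.adj b (b + u) := (hGadj _ _).mpr (by rw [add_sub_cancel_left]; exact huS)
    have harc2 : G.adj (b + u) u := (hGadj _ _).mpr (by
      have he : u - (b + u) = -b := by ring
      rw [he]; exact hnegb)
    have hbu0 : b + u ≠ 0 := by
      intro hc
      exact hbne (by linear_combination hc)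
    exact hφ.2 b (b + u) (b + u) u (hHadj _ _ harc1 (fun hc => hb0 hc.1))
      (hHadj _ _ harc2 (fun hc => hbu0 hc.1)) hbφ rfl
  -- 2u ≠ 0
  have h2u0 : u + u ≠ 0 := by
    intro hc
    have hneg : -u = u := by linear_combination -hc
    exact hS u huS (by rw [hneg]; exact huS)
  -- final contradiction with the 2-path u → (u+v) → -u
  have harc1 : G.adj u (u + v) := (hGadj _ _).mpr (by rw [add_sub_cancel_left]; exact hvS)
  have harc2 : G.adj (u + v) (-u) := (hGadj _ _).mpr (by
    have he : -u - (u + v) = v := by linear_combination (-2 : ZMod n) * huv - h2h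
    rw [he]; exact hvS)
  have hcol : φ u = φ (-u) := by rw [← hbeq]; exact hbφ.symm
  exact hφ.2 u (u + v) (u + v) (-u) (hHadj _ _ harc1 (fun hc => hu0 hc.1))
    (hHadj _ _ harc2 (fun hc => h2u0 (by linear_combination -hc.2))) hcol rfl
end

section
/- Let n ≥ 1 and let S ⊆ Z_n be such that no k ∈ Z_n satisfies both k ∈ S and −k ∈ S. Suppose that (a) for every k ∈ Z_n there exist x, y ∈ S ∪ {0} with k ≡ x + y (mod n) or k ≡ −(x + y) (mod n), and (b) for every s ∈ S and all x, y ∈ S ∪ {0}: if 2s ≡ x + y (mod n) then x = y = s, and 2s ≢ −(x + y) (mod n). Then the oriented circulant graph C(n,S) is a deeply critical oriented clique. -/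
section Aux

/-- Any oriented colouring of the circulant graph under hypothesis (a) is injective. -/
lemma circulant_coloring_injective (n : ℕ) (S : Set (ZMod n))
    (hS : ∀ k : ZMod n, k ∈ S → -k ∉ S)
    (ha : ∀ k : ZMod n, ∃ x ∈ S ∪ {0}, ∃ y ∈ S ∪ {0}, k = x + y ∨ k = -(x + y))
    {k : ℕ} (φ : ZMod n → Fin k) (h : (circulant n S hS).IsColoring φ) :
    Function.Injective φ := by
  obtain ⟨h1, h2⟩ := h
  have key : ∀ u w : ZMod n, φ u = φ w →
      ∀ p ∈ S ∪ {0}, ∀ q ∈ S ∪ {0}, w - u = p + q → u = w := by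
    intro u w huw p hp q hq hsum
    rcases hp with hp | hp <;> rcases hq with hq | hq
    · -- p ∈ S, q ∈ S : two arcs u → u+p → w
      have a1 : (circulant n S hS).adj u (u + p) := by
        show u + p - u ∈ S; rwa [add_sub_cancel_left]
      have a2 : (circulant n S hS).adj (u + p) w := by
        show w - (u + p) ∈ S
        have hq' : w - (u + p) = q := by linear_combination hsum
        rwa [hq']
      exact absurd rfl (h2 u (u + p) (u + p) w a1 a2 huw)
    · -- q = 0 : direct arc
      simp only [Set.mem_singleton_iff] at hq
      subst hq
      have a1 : (circulant n S hS).adj u w := by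
        show w - u ∈ S; rw [hsum, add_zero]; exact hp
      exact absurd huw (h1 u w a1)
    · simp only [Set.mem_singleton_iff] at hp
      subst hp
      have a1 : (circulant n S hS).adj u w := by
        show w - u ∈ S; rw [hsum, zero_add]; exact hq
      exact absurd huw (h1 u w a1)
    · simp only [Set.mem_singleton_iff] at hp hq
      subst hp; subst hq
      have h' : w - u = 0 := by rw [hsum, add_zero]
      exact (sub_eq_zero.mp h').symm
  intro u w huw
  obtain ⟨p, hp, q, hq, hcase⟩ := ha (w - u)
  rcases hcase with hc | hc
  · exact key u w huw p hp q hq hc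
  · refine (key w u huw.symm p hp q hq ?_).symm
    have h' : u - w = -(w - u) := by ring
    rw [h', hc, neg_neg]

end Aux

/-- sufficiency of the characterization of deeply critical oriented
circulant cliques. -/
theorem stmt3 (n : ℕ) (hn : 1 ≤ n) (S : Set (ZMod n))
    (hS : ∀ k : ZMod n, k ∈ S → -k ∉ S)
    (ha : ∀ k : ZMod n, ∃ x ∈ S ∪ {0}, ∃ y ∈ S ∪ {0}, k = x + y ∨ k = -(x + y))
    (hb : ∀ s ∈ S, ∀ x ∈ S ∪ {0}, ∀ y ∈ S ∪ {0},
      (s + s = x + y → x = s ∧ y = s) ∧ s + s ≠ -(x + y)) :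
    (circulant n S hS).IsDeeplyCriticalClique := by
  haveI : NeZero n := ⟨by omega⟩
  have h0 : (0 : ZMod n) ∉ S := fun h => hS 0 h (by simpa using h)
  set G := circulant n S hS with hG
  -- lower bound on any colouring of G
  have hlow : ∀ (k : ℕ) (φ : ZMod n → Fin k), G.IsColoring φ → n ≤ k := by
    intro k φ h
    have hinj := circulant_coloring_injective n S hS ha φ h
    have := Fintype.card_le_of_injective φ hinj
    simpa [ZMod.card, Fintype.card_fin] using this
  -- an injective n-colouring of G
  have hcolG : ∃ φ : ZMod n → Fin n, G.IsColoring φ := by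
    refine ⟨Fintype.equivFinOfCardEq (ZMod.card n), ?_, ?_⟩
    · intro a b hab heq
      have hab' : a = b := (Fintype.equivFinOfCardEq (ZMod.card n)).injective heq
      subst hab'
      have hm : a - a ∈ S := hab
      rw [sub_self] at hm
      exact h0 hm
    · intro p q u v hpq huv heq hqu
      have e1 : p = v := (Fintype.equivFinOfCardEq (ZMod.card n)).injective heq
      have e2 : q = u := (Fintype.equivFinOfCardEq (ZMod.card n)).injective hqu
      subst e1; subst e2
      have m1 : q - p ∈ S := hpq
      have m2 : p - q ∈ S := huv
      exact hS (q - p) m1 (by rwa [neg_sub])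
  have hchrom : G.chromNum = n := by
    show sInf {k : ℕ | ∃ φ : ZMod n → Fin k, G.IsColoring φ} = n
    refine le_antisymm (Nat.sInf_le hcolG) (le_csInf ⟨n, hcolG⟩ ?_)
    rintro k ⟨φ, hφ⟩
    exact hlow k φ hφ
  constructor
  · -- deeply critical
    intro x y hxy
    rw [hchrom]
    obtain ⟨s, hs, rfl⟩ : ∃ s, s ∈ S ∧ y = x + s := ⟨y - x, hxy, by ring⟩
    have hs0 : s ≠ 0 := fun h => h0 (h ▸ hs)
    have memS : ∀ t : ZMod n, t ∈ S → t ∈ S ∪ {0} := fun t ht => Or.inl ht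
    have mem0 : (0 : ZMod n) ∈ S ∪ {0} := Or.inr rfl
    have F1 : s + s ≠ 0 := by
      intro h
      have := (hb s hs 0 mem0 0 mem0).1 (by rw [h, add_zero])
      exact hs0 this.1.symm
    have F2 : s + s + s ≠ 0 := by
      intro h
      exact (hb s hs s (memS s hs) 0 mem0).2 (by linear_combination h)
    have F3 : s + s ∉ S := by
      intro h
      have h' := (hb s hs (s + s) (memS _ h) 0 mem0).1 (by ring)
      exact hs0 (by linear_combination h'.1)
    have F4 : -(s + s) ∉ S := fun h =>
      (hb s hs (-(s + s)) (memS _ h) 0 mem0).2 (by ring)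
    have F5 : -s ∉ S := hS s hs
    have F9 : -(s + s + s) ∉ S := fun h =>
      (hb s hs (-(s + s + s)) (memS _ h) s (memS s hs)).2 (by ring)
    have F7 : ∀ p ∈ S, ∀ q ∈ S, p + q = s + s → p = s ∧ q = s := fun p hp q hq h =>
      (hb s hs p (memS p hp) q (memS q hq)).1 h.symm
    have F8 : ∀ p ∈ S, ∀ q ∈ S, p + q ≠ -(s + s) := fun p hp q hq h =>
      (hb s hs p (memS p hp) q (memS q hq)).2 (by linear_combination h)
    have hxny : x ≠ x + s := fun h => hs0 (by linear_combination -h)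
    -- lower bound: a k-colouring of G - xy gives a (k+2)-colouring of G
    have hlow2 : ∀ (k : ℕ) (φ : ZMod n → Fin k),
        (G.deleteArc x (x + s)).IsColoring φ → n ≤ k + 2 := by
      intro k φ hcolD
      obtain ⟨h1, h2⟩ := hcolD
      set φ' : ZMod n → Fin (k + 2) := fun v =>
        if v = x then ⟨k, by omega⟩ else if v = x + s then ⟨k + 1, by omega⟩
        else ⟨(φ v).1, by have := (φ v).isLt; omega⟩ with hφ'
      have hyx : ¬(x + s = x) := fun h => hxny h.symm
      have hvx : (φ' x).1 = k := congrArg Fin.val (if_pos rfl)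
      have hvy : (φ' (x + s)).1 = k + 1 :=
        congrArg Fin.val ((if_neg hyx).trans (if_pos rfl))
      have hval : ∀ p, p ≠ x → p ≠ x + s → (φ' p).1 = (φ p).1 := fun p hp1 hp2 =>
        congrArg Fin.val ((if_neg hp1).trans (if_neg hp2))
      have hcases : ∀ p q, φ' p = φ' q →
          (p = x ∧ q = x) ∨ (p = x + s ∧ q = x + s) ∨
          (p ≠ x ∧ p ≠ x + s ∧ q ≠ x ∧ q ≠ x + s ∧ φ p = φ q) := by
        intro p q h
        have hv := congrArg Fin.val h
        by_cases hpx : p = x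
        · by_cases hqx : q = x
          · exact Or.inl ⟨hpx, hqx⟩
          · exfalso
            rw [hpx, hvx] at hv
            by_cases hqy : q = x + s
            · rw [hqy, hvy] at hv; omega
            · rw [hval q hqx hqy] at hv
              have := (φ q).isLt; omega
        · by_cases hpy : p = x + s
          · by_cases hqy : q = x + s
            · exact Or.inr (Or.inl ⟨hpy, hqy⟩)
            · exfalso
              rw [hpy, hvy] at hv
              by_cases hqx : q = x
              · rw [hqx, hvx] at hv; omega
              · rw [hval q hqx hqy] at hv
                have := (φ q).isLt; omega
          · rw [hval p hpx hpy] at hv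
            by_cases hqx : q = x
            · exfalso; rw [hqx, hvx] at hv
              have := (φ p).isLt; omega
            · by_cases hqy : q = x + s
              · exfalso; rw [hqy, hvy] at hv
                have := (φ p).isLt; omega
              · refine Or.inr (Or.inr ⟨hpx, hpy, hqx, hqy, ?_⟩)
                rw [hval q hqx hqy] at hv
                exact Fin.ext hv
      have hcol : G.IsColoring φ' := by
        constructor
        · intro a b hab heq
          rcases hcases a b heq with ⟨ea, eb⟩ | ⟨ea, eb⟩ | ⟨ha1, ha2, hb1, hb2, heq'⟩
          · rw [ea, eb] at hab; exact G.irrefl x hab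
          · rw [ea, eb] at hab; exact G.irrefl (x + s) hab
          · exact h1 a b ⟨hab, fun hc => ha1 hc.1⟩ heq'
        · intro a b u v hab huv hav hbu
          rcases hcases a v hav with ⟨ea, ev⟩ | ⟨ea, ev⟩ | ⟨ha1, ha2, hv1, hv2, hav'⟩ <;>
            rcases hcases b u hbu with ⟨eb, eu⟩ | ⟨eb, eu⟩ | ⟨hb1, hb2, hu1, hu2, hbu'⟩
          · rw [ea, eb] at hab; exact G.irrefl x hab
          · rw [ea, eb] at hab; rw [eu, ev] at huv
            exact G.antisymm x (x + s) hab huv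
          · rw [ea] at hab; rw [ev] at huv
            exact h2 x b u x ⟨hab, fun hc => hb2 hc.2⟩
              ⟨huv, fun hc => hxny hc.2⟩ rfl hbu'
          · rw [ea, eb] at hab; rw [eu, ev] at huv
            exact G.antisymm (x + s) x hab huv
          · rw [ea, eb] at hab; exact G.irrefl (x + s) hab
          · rw [ea] at hab; rw [ev] at huv
            exact h2 (x + s) b u (x + s) ⟨hab, fun hc => hxny hc.1.symm⟩
              ⟨huv, fun hc => hu1 hc.1⟩ rfl hbu'
          · rw [eb] at hab; rw [eu] at huv
            exact h2 a x x v ⟨hab, fun hc => ha1 hc.1⟩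
              ⟨huv, fun hc => hv2 hc.2⟩ hav' rfl
          · rw [eb] at hab; rw [eu] at huv
            exact h2 a (x + s) (x + s) v ⟨hab, fun hc => ha1 hc.1⟩
              ⟨huv, fun hc => hxny hc.1.symm⟩ hav' rfl
          · exact h2 a b u v ⟨hab, fun hc => ha1 hc.1⟩
              ⟨huv, fun hc => hu1 hc.1⟩ hav' hbu'
      exact hlow (k + 2) φ' hcol
    -- upper bound: explicit (n-2)-colouring of G - xy
    set ψ : ZMod n → ZMod n := fun v =>
      if v = x + (s + s) then x else if v = x - s then x + s else v with hψ
    have d1 : x ≠ x + (s + s) := fun h => F1 (by linear_combination -h)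
    have d2 : x ≠ x - s := fun h => hs0 (by linear_combination h)
    have d3 : x + s ≠ x + (s + s) := fun h => hs0 (by linear_combination -h)
    have d4 : x + s ≠ x - s := fun h => F1 (by linear_combination h)
    have d5 : x + (s + s) ≠ x - s := fun h => F2 (by linear_combination h)
    have hpsi1 : ψ (x + (s + s)) = x := if_pos rfl
    have hpsi2 : ψ (x - s) = x + s := (if_neg (Ne.symm d5)).trans (if_pos rfl)
    have hpsiv : ∀ v, v ≠ x + (s + s) → v ≠ x - s → ψ v = v := fun v h1 h2 =>
      (if_neg h1).trans (if_neg h2)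
    have hpsi : ∀ p q, ψ p = ψ q → p = q ∨ (p = x ∧ q = x + (s + s)) ∨
        (p = x + (s + s) ∧ q = x) ∨ (p = x + s ∧ q = x - s) ∨
        (p = x - s ∧ q = x + s) := by
      intro p q h
      by_cases hp1 : p = x + (s + s)
      · subst hp1
        rw [hpsi1] at h
        by_cases hq1 : q = x + (s + s)
        · exact Or.inl (by rw [hq1])
        · by_cases hq2 : q = x - s
          · subst hq2; rw [hpsi2] at h; exact absurd h hxny
          · rw [hpsiv q hq1 hq2] at h
            exact Or.inr (Or.inr (Or.inl ⟨rfl, h.symm⟩))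
      · by_cases hp2 : p = x - s
        · subst hp2
          rw [hpsi2] at h
          by_cases hq1 : q = x + (s + s)
          · subst hq1; rw [hpsi1] at h; exact absurd h.symm hxny
          · by_cases hq2 : q = x - s
            · exact Or.inl (by rw [hq2])
            · rw [hpsiv q hq1 hq2] at h
              exact Or.inr (Or.inr (Or.inr (Or.inr ⟨rfl, h.symm⟩)))
        · rw [hpsiv p hp1 hp2] at h
          by_cases hq1 : q = x + (s + s)
          · subst hq1; rw [hpsi1] at h
            exact Or.inr (Or.inl ⟨h, rfl⟩)
          · by_cases hq2 : q = x - s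
            · subst hq2; rw [hpsi2] at h
              exact Or.inr (Or.inr (Or.inr (Or.inl ⟨h, rfl⟩)))
            · rw [hpsiv q hq1 hq2] at h
              exact Or.inl h
    set T : Finset (ZMod n) := Finset.univ \ {x + (s + s), x - s} with hT
    have hmemT : ∀ v, ψ v ∈ T := by
      intro v
      have hm : ψ v ≠ x + (s + s) ∧ ψ v ≠ x - s := by
        by_cases h1 : v = x + (s + s)
        · rw [h1, hpsi1]; exact ⟨d1, d2⟩
        · by_cases h2 : v = x - s
          · rw [h2, hpsi2]; exact ⟨d3, d4⟩
          · rw [hpsiv v h1 h2]; exact ⟨h1, h2⟩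
      simp only [hT, Finset.mem_sdiff, Finset.mem_univ, true_and, Finset.mem_insert,
        Finset.mem_singleton, not_or]
      exact hm
    have hTcard : T.card = n - 2 := by
      rw [hT, Finset.card_sdiff_of_subset (Finset.subset_univ _), Finset.card_univ, ZMod.card,
        Finset.card_pair d5]
    have hcardT : Fintype.card ↥T = n - 2 := by rw [Fintype.card_coe]; exact hTcard
    set e : ↥T ≃ Fin (n - 2) := Fintype.equivFinOfCardEq hcardT with he
    set φ : ZMod n → Fin (n - 2) := fun v => e ⟨ψ v, hmemT v⟩ with hφdef
    have hφeq : ∀ p q, φ p = φ q → ψ p = ψ q := fun p q h =>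
      congrArg Subtype.val (e.injective h)
    have hcol : (G.deleteArc x (x + s)).IsColoring φ := by
      constructor
      · intro a b hab heq
        obtain ⟨hm, hd⟩ := hab
        replace hm : b - a ∈ S := hm
        rcases hpsi a b (hφeq a b heq) with ea | ⟨ea, eb⟩ | ⟨ea, eb⟩ | ⟨ea, eb⟩ | ⟨ea, eb⟩
        · rw [ea, sub_self] at hm; exact h0 hm
        · rw [ea, eb] at hm
          exact F3 (by rwa [show x + (s + s) - x = s + s from by ring] at hm)
        · rw [ea, eb] at hm
          exact F4 (by rwa [show x - (x + (s + s)) = -(s + s) from by ring] at hm)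
        · rw [ea, eb] at hm
          exact F4 (by rwa [show x - s - (x + s) = -(s + s) from by ring] at hm)
        · rw [ea, eb] at hm
          exact F3 (by rwa [show x + s - (x - s) = s + s from by ring] at hm)
      · intro a b u v hab huv hav hbu
        obtain ⟨hm1, hd1⟩ := hab
        obtain ⟨hm2, hd2⟩ := huv
        replace hm1 : b - a ∈ S := hm1
        replace hm2 : v - u ∈ S := hm2
        replace hd1 : ¬(a = x ∧ b = x + s) := hd1
        replace hd2 : ¬(u = x ∧ v = x + s) := hd2
        rcases hpsi a v (hφeq a v hav) with ea | ⟨ea, ev⟩ | ⟨ea, ev⟩ | ⟨ea, ev⟩ | ⟨ea, ev⟩ <;>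
          rcases hpsi b u (hφeq b u hbu) with eb | ⟨eb, eu⟩ | ⟨eb, eu⟩ | ⟨eb, eu⟩ | ⟨eb, eu⟩
        -- (1,1): a = v, b = u : opposite arcs
        · rw [← ea, ← eb] at hm2
          exact hS (b - a) hm1 (by rwa [neg_sub])
        -- (1,2): b = x, u = x+2s
        · rw [eb, ea] at hm1; rw [eu] at hm2
          exact F8 (x - v) hm1 (v - (x + (s + s))) hm2 (by ring)
        -- (1,3): b = x+2s, u = x
        · rw [eb, ea] at hm1; rw [eu] at hm2
          have h7 := F7 (v - x) hm2 (x + (s + s) - v) hm1 (by ring)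
          rw [eu] at hd2
          exact hd2 ⟨rfl, by linear_combination h7.1⟩
        -- (1,4): b = x+s, u = x-s
        · rw [eb, ea] at hm1; rw [eu] at hm2
          have h7 := F7 (x + s - v) hm1 (v - (x - s)) hm2 (by ring)
          rw [ea, eb] at hd1
          exact hd1 ⟨by linear_combination -h7.1, rfl⟩
        -- (1,5): b = x-s, u = x+s
        · rw [eb, ea] at hm1; rw [eu] at hm2
          exact F8 (x - s - v) hm1 (v - (x + s)) hm2 (by ring)
        -- (2,1): a = x, v = x+2s, b = u
        · rw [ea] at hm1; rw [← eb, ev] at hm2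
          have h7 := F7 (b - x) hm1 (x + (s + s) - b) hm2 (by ring)
          rw [ea] at hd1
          exact hd1 ⟨rfl, by linear_combination h7.1⟩
        -- (2,2)
        · rw [ea, eb, sub_self] at hm1; exact h0 hm1
        -- (2,3)
        · rw [ea, eb] at hm1
          exact F3 (by rwa [show x + (s + s) - x = s + s from by ring] at hm1)
        -- (2,4)
        · rw [ea] at hd1; rw [eb] at hd1
          exact hd1 ⟨rfl, rfl⟩
        -- (2,5)
        · rw [ea, eb] at hm1
          exact F5 (by rwa [show x - s - x = -s from by ring] at hm1)
        -- (3,1): a = x+2s, v = x, b = u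
        · rw [ea] at hm1; rw [← eb, ev] at hm2
          exact F8 (b - (x + (s + s))) hm1 (x - b) hm2 (by ring)
        -- (3,2)
        · rw [ea, eb] at hm1
          exact F4 (by rwa [show x - (x + (s + s)) = -(s + s) from by ring] at hm1)
        -- (3,3)
        · rw [ea, eb, sub_self] at hm1; exact h0 hm1
        -- (3,4)
        · rw [ea, eb] at hm1
          exact F5 (by rwa [show x + s - (x + (s + s)) = -s from by ring] at hm1)
        -- (3,5)
        · rw [ea, eb] at hm1
          exact F9 (by rwa [show x - s - (x + (s + s)) = -(s + s + s) from by ring] at hm1)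
        -- (4,1): a = x+s, v = x-s, b = u
        · rw [ea] at hm1; rw [← eb, ev] at hm2
          exact F8 (b - (x + s)) hm1 (x - s - b) hm2 (by ring)
        -- (4,2)
        · rw [ea, eb] at hm1
          exact F5 (by rwa [show x - (x + s) = -s from by ring] at hm1)
        -- (4,3)
        · rw [eu, ev] at hm2
          exact F5 (by rwa [show x - s - x = -s from by ring] at hm2)
        -- (4,4)
        · rw [ea, eb, sub_self] at hm1; exact h0 hm1
        -- (4,5)
        · rw [ea, eb] at hm1
          exact F4 (by rwa [show x - s - (x + s) = -(s + s) from by ring] at hm1)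
        -- (5,1): a = x-s, v = x+s, b = u
        · rw [ea] at hm1; rw [← eb, ev] at hm2
          have h7 := F7 (b - (x - s)) hm1 (x + s - b) hm2 (by ring)
          rw [← eb, ev] at hd2
          exact hd2 ⟨by linear_combination h7.1, rfl⟩
        -- (5,2)
        · rw [eu, ev] at hm2
          exact F5 (by rwa [show x + s - (x + (s + s)) = -s from by ring] at hm2)
        -- (5,3)
        · rw [eu, ev] at hd2
          exact hd2 ⟨rfl, rfl⟩
        -- (5,4)
        · rw [ea, eb] at hm1
          exact F3 (by rwa [show x + s - (x - s) = s + s from by ring] at hm1)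
        -- (5,5)
        · rw [ea, eb, sub_self] at hm1; exact h0 hm1
    -- assemble
    show sInf {k : ℕ | ∃ φ : ZMod n → Fin k, (G.deleteArc x (x + s)).IsColoring φ} = n - 2
    refine le_antisymm (Nat.sInf_le ⟨φ, hcol⟩) (le_csInf ⟨n - 2, φ, hcol⟩ ?_)
    rintro k ⟨φk, hφk⟩
    have := hlow2 k φk hφk
    omega
  · -- absolute clique
    show G.chromNum = Nat.card (ZMod n)
    rw [hchrom, Nat.card_zmod]
end

section
/- Let n ≥ 1 and let S ⊆ Z_n be such that no k ∈ Z_n satisfies both k ∈ S and −k ∈ S. If the oriented circulant graph C(n,S) is a deeply critical oriented clique, then (a) for every k ∈ Z_n there exist x, y ∈ S ∪ {0} with k ≡ x + y (mod n) or k ≡ −(x + y) (mod n), and (b) for every s ∈ S and all x, y ∈ S ∪ {0}: if 2s ≡ x + y (mod n) then x = y = s, and 2s ≢ −(x + y) (mod n). -/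
section Aux

open OrientedGraph

/-- Any injective map gives an oriented coloring. -/
private lemma exists_injective_coloring {V : Type} [Fintype V] (G : OrientedGraph V) :
    ∃ φ : V → Fin (Fintype.card V), G.IsColoring φ := by
  refine ⟨Fintype.equivFin V, ?_, ?_⟩
  · intro x y hxy hc
    have := (Fintype.equivFin V).injective hc
    subst this
    exact G.irrefl x hxy
  · intro x y u v hxy huv hc hc'
    have h1 := (Fintype.equivFin V).injective hc
    subst h1
    have h2 := (Fintype.equivFin V).injective hc'
    subst h2
    exact G.antisymm x y hxy huv

private lemma chromNum_le_of {V W : Type} [Fintype W] (G : OrientedGraph V) (ψ : V → W)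
    (h1 : ∀ x y, G.adj x y → ψ x ≠ ψ y)
    (h2 : ∀ x y u v, G.adj x y → G.adj u v → ψ x = ψ v → ψ y ≠ ψ u) :
    G.chromNum ≤ Fintype.card W := by
  apply Nat.sInf_le
  refine ⟨fun v => Fintype.equivFin W (ψ v), ?_, ?_⟩
  · intro x y hxy hc
    exact h1 x y hxy ((Fintype.equivFin W).injective hc)
  · intro x y u v hxy huv hc hc'
    exact h2 x y u v hxy huv ((Fintype.equivFin W).injective hc)
      ((Fintype.equivFin W).injective hc')

/-- In an absolute clique, any two distinct vertices are joined by an arc or a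
directed 2-path (in some direction). -/
private lemma clique_conn {V : Type} [Fintype V] [DecidableEq V] (G : OrientedGraph V)
    (hG : G.IsAbsoluteClique) {a b : V} (hab : a ≠ b)
    (hnab : ¬ G.adj a b) (hnba : ¬ G.adj b a)
    (h2ab : ∀ c, ¬ (G.adj a c ∧ G.adj c b)) (h2ba : ∀ c, ¬ (G.adj b c ∧ G.adj c a)) :
    False := by
  classical
  let ψ : V → {v : V // v ≠ b} := fun v => if h : v = b then ⟨a, hab⟩ else ⟨v, h⟩
  have hψ : ∀ u v : V, ψ u = ψ v → u = v ∨ (u = a ∧ v = b) ∨ (u = b ∧ v = a) := by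
    intro u v huv
    have hval := congrArg Subtype.val huv
    by_cases hu : u = b <;> by_cases hv : v = b
    · exact Or.inl (hu.trans hv.symm)
    · simp only [ψ, dif_pos hu, dif_neg hv] at hval
      exact Or.inr (Or.inr ⟨hu, hval.symm⟩)
    · simp only [ψ, dif_neg hu, dif_pos hv] at hval
      exact Or.inr (Or.inl ⟨hval, hv⟩)
    · simp only [ψ, dif_neg hu, dif_neg hv] at hval
      exact Or.inl hval
  have hle : G.chromNum ≤ Fintype.card {v : V // v ≠ b} := by
    apply chromNum_le_of G ψ
    · intro x y hxy hc
      rcases hψ x y hc with rfl | ⟨rfl, rfl⟩ | ⟨rfl, rfl⟩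
      · exact G.irrefl x hxy
      · exact hnab hxy
      · exact hnba hxy
    · intro x y u v hxy huv hc hc'
      rcases hψ x v hc with rfl | ⟨rfl, rfl⟩ | ⟨rfl, rfl⟩ <;>
        rcases hψ y u hc' with rfl | ⟨rfl, rfl⟩ | ⟨rfl, rfl⟩
      · exact G.antisymm x y hxy huv
      · exact h2ba x ⟨huv, hxy⟩
      · exact h2ab x ⟨huv, hxy⟩
      · exact h2ab y ⟨hxy, huv⟩
      · exact G.irrefl _ hxy
      · exact hnab hxy
      · exact h2ba y ⟨hxy, huv⟩
      · exact hnba hxy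
      · exact G.irrefl _ hxy
  have hcard : Fintype.card {v : V // v ≠ b} = Fintype.card V - 1 := by
    have := Fintype.card_subtype_compl (fun v : V => v = b)
    rw [Fintype.card_subtype_eq] at this
    exact this
  have hpos : 0 < Fintype.card V := Fintype.card_pos_iff.mpr ⟨b⟩
  have hGcard := hG
  rw [OrientedGraph.IsAbsoluteClique, Nat.card_eq_fintype_card] at hGcard
  omega

end Aux

/-- necessity of the characterization of deeply critical oriented
circulant cliques. -/
theorem stmt4 (n : ℕ) (hn : 1 ≤ n) (S : Set (ZMod n))
    (hS : ∀ k : ZMod n, k ∈ S → -k ∉ S)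
    (h : (circulant n S hS).IsDeeplyCriticalClique) :
    (∀ k : ZMod n, ∃ x ∈ S ∪ {0}, ∃ y ∈ S ∪ {0}, k = x + y ∨ k = -(x + y)) ∧
    (∀ s ∈ S, ∀ x ∈ S ∪ {0}, ∀ y ∈ S ∪ {0},
      (s + s = x + y → x = s ∧ y = s) ∧ s + s ≠ -(x + y)) := by
  haveI : NeZero n := ⟨by omega⟩
  have hchi : (circulant n S hS).chromNum = n := by
    have h2 := h.2
    rwa [OrientedGraph.IsAbsoluteClique, Nat.card_zmod] at h2
  constructor
  · -- Part (a)
    intro k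
    by_cases hk : k = 0
    · exact ⟨0, Set.mem_union_right _ rfl, 0, Set.mem_union_right _ rfl,
        Or.inl (by rw [hk, add_zero])⟩
    · by_contra hcon
      push_neg at hcon
      refine clique_conn (circulant n S hS) h.2
        (show (0 : ZMod n) ≠ k from fun h0 => hk h0.symm) ?_ ?_ ?_ ?_
      · intro (had : k - 0 ∈ S)
        exact (hcon (k - 0) (Set.mem_union_left _ had) 0 (Set.mem_union_right _ rfl)).1
          (by ring)
      · intro (had : 0 - k ∈ S)
        exact (hcon (0 - k) (Set.mem_union_left _ had) 0 (Set.mem_union_right _ rfl)).2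
          (by ring)
      · rintro c ⟨(h1 : c - 0 ∈ S), (h2 : k - c ∈ S)⟩
        exact (hcon (c - 0) (Set.mem_union_left _ h1) (k - c)
          (Set.mem_union_left _ h2)).1 (by ring)
      · rintro c ⟨(h1 : c - k ∈ S), (h2 : 0 - c ∈ S)⟩
        exact (hcon (c - k) (Set.mem_union_left _ h1) (0 - c)
          (Set.mem_union_left _ h2)).2 (by ring)
  · -- Part (b)
    intro s hs x hx y hy
    rw [Set.mem_union, Set.mem_singleton_iff] at hx hy
    have hs0 : s ≠ 0 := by
      intro h0
      refine hS s hs ?_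
      rw [h0, neg_zero, ← h0]
      exact hs
    have h2s0 : s + s ≠ 0 := by
      intro h0
      have hminus : -s = s := neg_eq_of_add_eq_zero_left h0
      exact hS s hs (by rw [hminus]; exact hs)
    have hns : (-s : ZMod n) ≠ s := fun hh => hS s hs (by rw [hh]; exact hs)
    have hnsz : (-s : ZMod n) ≠ 0 := fun hh => hs0 (neg_eq_zero.mp hh)
    obtain hcrit := h.1 0 s (show s - 0 ∈ S by simpa using hs)
    have hne : {k | ∃ φ : ZMod n → Fin k,
        ((circulant n S hS).deleteArc 0 s).IsColoring φ}.Nonempty := by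
      obtain ⟨φ, hφ⟩ := exists_injective_coloring ((circulant n S hS).deleteArc 0 s)
      exact ⟨Fintype.card (ZMod n), φ, hφ⟩
    obtain ⟨φ, hφ1, hφ2⟩ := Nat.sInf_mem hne
    -- φ : ZMod n → Fin (chromNum of the deleted graph)
    have no2 : ∀ p c q : ZMod n, φ p = φ q →
        ¬ (((circulant n S hS).deleteArc 0 s).adj p c ∧
           ((circulant n S hS).deleteArc 0 s).adj c q) := by
      rintro p c q hpq ⟨ha1, ha2⟩
      exact hφ2 p c c q ha1 ha2 hpq rfl
    -- Step 1 : φ (-s) = φ s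
    have hkey : φ (-s) = φ s := by
      by_contra hne'
      have hinj : ∀ a b : ZMod n, a ≠ 0 → b ≠ 0 → φ a = φ b → a = b := by
        intro a b ha hb hab
        by_contra hne2
        refine clique_conn (circulant n S hS) h.2 hne2 ?_ ?_ ?_ ?_
        · intro (had : b - a ∈ S)
          exact hφ1 a b ⟨had, fun hc => ha hc.1⟩ hab
        · intro (had : a - b ∈ S)
          exact hφ1 b a ⟨had, fun hc => hb hc.1⟩ hab.symm
        · rintro c ⟨(h1 : c - a ∈ S), (h2 : b - c ∈ S)⟩
          by_cases hdel : c = 0 ∧ b = s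
          · obtain ⟨rfl, hbs⟩ := hdel
            rw [hbs] at hab
            have hna : a ≠ -s := by
              intro hh
              exact hne' (by rw [← hh]; exact hab)
            refine no2 a (s + a) s hab ⟨⟨?_, fun hc => ha hc.1⟩, ⟨?_, ?_⟩⟩
            · show s + a - a ∈ S
              simpa using hs
            · show s - (s + a) ∈ S
              have : s - (s + a) = 0 - a := by ring
              rw [this]; exact h1
            · intro hc
              exact hna (eq_neg_of_add_eq_zero_right hc.1)
          · exact no2 a c b hab ⟨⟨h1, fun hc => ha hc.1⟩, ⟨h2, hdel⟩⟩
        · rintro c ⟨(h1 : c - b ∈ S), (h2 : a - c ∈ S)⟩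
          by_cases hdel : c = 0 ∧ a = s
          · obtain ⟨rfl, has⟩ := hdel
            rw [has] at hab
            have hnb : b ≠ -s := by
              intro hh
              exact hne' (by rw [← hh]; exact hab.symm)
            refine no2 b (s + b) s hab.symm ⟨⟨?_, fun hc => hb hc.1⟩, ⟨?_, ?_⟩⟩
            · show s + b - b ∈ S
              simpa using hs
            · show s - (s + b) ∈ S
              have : s - (s + b) = 0 - b := by ring
              rw [this]; exact h1
            · intro hc
              exact hnb (eq_neg_of_add_eq_zero_right hc.1)
          · exact no2 b c a hab.symm ⟨⟨h1, fun hc => hb hc.1⟩, ⟨h2, hdel⟩⟩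
      have hinj' : Function.Injective
          (fun v : {v : ZMod n // v ≠ 0} => φ v.1) := by
        intro a b hh
        exact Subtype.ext (hinj a.1 b.1 a.2 b.2 hh)
      have hle := Fintype.card_le_of_injective _ hinj'
      have hcard1 : Fintype.card {v : ZMod n // v ≠ 0} = n - 1 := by
        have := Fintype.card_subtype_compl (fun v : ZMod n => v = 0)
        rw [Fintype.card_subtype_eq, ZMod.card] at this
        exact this
      rw [hcard1, Fintype.card_fin] at hle
      have hn2 : 2 ≤ n := by
        have : 1 < Fintype.card (ZMod n) :=
          Fintype.one_lt_card_iff_nontrivial.mpr ⟨⟨s, 0, hs0⟩⟩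
        rwa [ZMod.card] at this
      have hfin : sInf {k | ∃ φ : ZMod n → Fin k,
          ((circulant n S hS).deleteArc 0 s).IsColoring φ} = n - 2 :=
        hcrit.trans (by rw [hchi])
      omega
    -- Step 2 : consequences
    have F1 : s + s ∉ S := by
      intro hmem
      refine hφ1 (-s) s ⟨?_, fun hc => hnsz hc.1⟩ hkey
      show s - (-s) ∈ S
      have : s - (-s) = s + s := by ring
      rw [this]; exact hmem
    have F2 : -(s + s) ∉ S := by
      intro hmem
      refine hφ1 s (-s) ⟨?_, fun hc => hs0 hc.1⟩ hkey.symm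
      show -s - s ∈ S
      have : -s - s = -(s + s) := by ring
      rw [this]; exact hmem
    constructor
    · -- uniqueness of decomposition
      intro heq
      rcases hx with hx | rfl
      · rcases hy with hy | rfl
        · by_cases hxs : x = s
          · subst hxs
            exact ⟨rfl, (add_left_cancel heq).symm ▸ rfl⟩
          · exfalso
            refine no2 (-s) (x - s) s hkey ⟨⟨?_, fun hc => hnsz hc.1⟩, ⟨?_, ?_⟩⟩
            · show x - s - (-s) ∈ S
              have : x - s - (-s) = x := by ring
              rw [this]; exact hx
            · show s - (x - s) ∈ S
              have : s - (x - s) = y := by linear_combination heq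
              rw [this]; exact hy
            · intro hc
              exact hxs (sub_eq_zero.mp hc.1)
        · exact absurd (show s + s ∈ S by rw [heq, add_zero]; exact hx) F1
      · rcases hy with hy | rfl
        · exact absurd (show s + s ∈ S by rw [heq, zero_add]; exact hy) F1
        · exact absurd (by simpa using heq) h2s0
    · -- no reverse decomposition
      intro heq
      rcases hx with hx | rfl
      · rcases hy with hy | rfl
        · refine no2 s (s + x) (-s) hkey.symm ⟨⟨?_, fun hc => hs0 hc.1⟩, ⟨?_, ?_⟩⟩
          · show s + x - s ∈ S
            have : s + x - s = x := by ring
            rw [this]; exact hx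
          · show -s - (s + x) ∈ S
            have : -s - (s + x) = y := by linear_combination -heq
            rw [this]; exact hy
          · intro hc
            exact hns hc.2
        · refine F2 ?_
          rw [show -(s + s) = x by linear_combination -heq]
          exact hx
      · rcases hy with hy | rfl
        · refine F2 ?_
          rw [show -(s + s) = y by linear_combination -heq]
          exact hy
        · exact h2s0 (by simpa using heq)
end

section
/- If G is a deeply critical oriented clique with extending partition X1 ⊔ X2 ⊔ X3 and G6 is the 6-extension of G with respect to this partition, then the partition of V(G6) into the parts X1' = X1 ∪ {x1⁻, x1⁺}, X2' = X2 ∪ {x2⁻, x2⁺}, X3' = X3 ∪ {x3⁻, x3⁺} is an extending partition of G6; in particular, G6 is extendable. -/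
lemma mem6 : ∀ s : Fin 6, ∃! i : Fin 3, s = xminus i ∨ s = xplus i := by
  simp only [ExistsUnique]; decide

lemma xm_inj : ∀ i j : Fin 3, xminus i = xminus j → i = j := by decide
lemma xp_inj : ∀ i j : Fin 3, xplus i = xplus j → i = j := by decide
lemma xm_ne_xp : ∀ i j : Fin 3, xminus i ≠ xplus j := by decide
lemma no_mm : ∀ i j : Fin 3, ¬ extraAdj (xminus i) (xminus j) := by decide
lemma no_pp : ∀ i j : Fin 3, ¬ extraAdj (xplus i) (xplus j) := by decide
lemma no_b1 : ∀ i : Fin 3, ¬ extraAdj (xminus (i+1)) (xplus i) := by decide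
lemma no_b2 : ∀ i : Fin 3, ¬ extraAdj (xplus (i+1)) (xminus i) := by decide
lemma fin3_succ_ne : ∀ i : Fin 3, i + 1 ≠ i := by decide

/-- the parts `Xᵢ' = Xᵢ ∪ {xᵢ⁻, xᵢ⁺}` form an extending partition of the
6-extension; in particular the 6-extension is extendable. -/
theorem stmt8 {V : Type} [Finite V] (G : OrientedGraph V) (X : Fin 3 → Set V)
    (hG : G.IsDeeplyCriticalClique) (hX : G.IsExtendingPartition X) :
    (sixExtension G X).IsExtendingPartition
      (fun i => (Sum.inl '' X i) ∪ {Sum.inr (xminus i), Sum.inr (xplus i)}) ∧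
    (sixExtension G X).Extendable := by
  obtain ⟨hpart, hnoarc, hforw, hback⟩ := hX
  have huniq : ∀ v (i j : Fin 3), v ∈ X i → v ∈ X j → i = j := fun v i j hi hj =>
    ((hpart v).unique hi hj)
  suffices h : (sixExtension G X).IsExtendingPartition
      (fun i => (Sum.inl '' X i) ∪ {Sum.inr (xminus i), Sum.inr (xplus i)}) from
    ⟨h, _, h⟩
  refine ⟨?_, ?_, ?_, ?_⟩
  · -- unique membership
    rintro (u | s)
    · obtain ⟨i, hi, hu⟩ := hpart u
      refine ⟨i, Or.inl ⟨u, hi, rfl⟩, ?_⟩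
      rintro j (⟨x, hx, hxe⟩ | hj | hj)
      · cases hxe; exact hu j hx
      · exact absurd hj (by simp)
      · exact absurd hj (by simp)
    · obtain ⟨i, hi, hu⟩ := mem6 s
      refine ⟨i, ?_, ?_⟩
      · rcases hi with h | h
        · exact Or.inr (Or.inl (by rw [h]))
        · exact Or.inr (Or.inr (by rw [h]; exact rfl))
      · rintro j (⟨x, hx, hxe⟩ | hj | hj)
        · exact absurd hxe (by simp)
        · exact hu j (Or.inl (Sum.inr.inj hj))
        · exact hu j (Or.inr (Sum.inr.inj hj))
  · -- no backward arcs
    rintro i u (⟨a, ha, rfl⟩ | rfl | rfl) v (⟨b, hb, rfl⟩ | rfl | rfl) hadj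
    · exact hnoarc i a ha b hb hadj
    · obtain ⟨j, hj, -⟩ := hadj; exact xm_ne_xp i j hj
    · obtain ⟨j, hj, haj⟩ := hadj
      exact fin3_succ_ne i (huniq a (i+1) i ha (xp_inj i j hj ▸ haj))
    · obtain ⟨j, hj, hbj⟩ := hadj
      exact fin3_succ_ne i ((huniq b i (i+1) hb (xm_inj (i+1) j hj ▸ hbj)).symm)
    · exact no_mm (i+1) i hadj
    · exact no_b1 i hadj
    · obtain ⟨j, hj, -⟩ := hadj; exact xm_ne_xp j (i+1) hj.symm
    · exact no_b2 i hadj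
    · exact no_pp (i+1) i hadj
  · -- forward extension
    rintro i u (⟨a, ha, rfl⟩ | rfl | rfl)
    · obtain ⟨v₀, hv₀, hset⟩ := hforw i a ha
      refine ⟨Sum.inl v₀, Or.inl ⟨v₀, hv₀, rfl⟩, ?_⟩
      ext w
      constructor
      · rintro ⟨(⟨b, hb, rfl⟩ | rfl | rfl), hadj⟩
        · have : b ∈ ({a} : Set V) := hset ▸ ⟨hb, hadj⟩
          simp_all
        · obtain ⟨j, hj, hvj⟩ := hadj
          exact absurd (huniq v₀ (i+1) i hv₀ (xm_inj i j hj ▸ hvj)) (fin3_succ_ne i)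
        · obtain ⟨j, hj, -⟩ := hadj; exact absurd hj.symm (xm_ne_xp j i)
      · rintro rfl
        have haa : a ∈ {w | w ∈ X i ∧ G.adj w v₀} := hset ▸ rfl
        exact ⟨Or.inl ⟨a, ha, rfl⟩, haa.2⟩
    · refine ⟨Sum.inr (xplus (i+1)), Or.inr (Or.inr rfl), ?_⟩
      ext w
      constructor
      · rintro ⟨(⟨b, hb, rfl⟩ | rfl | rfl), hadj⟩
        · obtain ⟨j, hj, hbj⟩ := hadj
          exact absurd (huniq b i (i+1) hb (xp_inj (i+1) j hj ▸ hbj)).symm (fin3_succ_ne i)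
        · rfl
        · exact absurd hadj (no_pp i (i+1))
      · rintro rfl
        exact ⟨Or.inr (Or.inl rfl), ⟨i, Or.inl ⟨rfl, rfl⟩⟩⟩
    · refine ⟨Sum.inr (xminus (i+1)), Or.inr (Or.inl rfl), ?_⟩
      ext w
      constructor
      · rintro ⟨(⟨b, hb, rfl⟩ | rfl | rfl), hadj⟩
        · obtain ⟨j, hj, -⟩ := hadj; exact absurd hj (xm_ne_xp (i+1) j)
        · exact absurd hadj (no_mm i (i+1))
        · rfl
      · rintro rfl
        exact ⟨Or.inr (Or.inr rfl), ⟨i, Or.inr ⟨rfl, rfl⟩⟩⟩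
  · -- backward extension
    rintro i v (⟨b, hb, rfl⟩ | rfl | rfl)
    · obtain ⟨u₀, hu₀, hset⟩ := hback i b hb
      refine ⟨Sum.inl u₀, Or.inl ⟨u₀, hu₀, rfl⟩, ?_⟩
      ext w
      constructor
      · rintro ⟨(⟨c, hc, rfl⟩ | rfl | rfl), hadj⟩
        · have : c ∈ ({b} : Set V) := hset ▸ ⟨hc, hadj⟩
          simp_all
        · obtain ⟨j, hj, -⟩ := hadj; exact absurd hj (xm_ne_xp (i+1) j)
        · obtain ⟨j, hj, huj⟩ := hadj
          exact absurd (huniq u₀ i (i+1) hu₀ (xp_inj (i+1) j hj ▸ huj)).symm (fin3_succ_ne i)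
      · rintro rfl
        have hbb : b ∈ {w | w ∈ X (i+1) ∧ G.adj u₀ w} := hset ▸ rfl
        exact ⟨Or.inl ⟨b, hb, rfl⟩, hbb.2⟩
    · refine ⟨Sum.inr (xplus i), Or.inr (Or.inr rfl), ?_⟩
      ext w
      constructor
      · rintro ⟨(⟨c, hc, rfl⟩ | rfl | rfl), hadj⟩
        · obtain ⟨j, hj, -⟩ := hadj; exact absurd hj.symm (xm_ne_xp j i)
        · rfl
        · exact absurd hadj (no_pp i (i+1))
      · rintro rfl
        exact ⟨Or.inr (Or.inl rfl), ⟨i, Or.inr ⟨rfl, rfl⟩⟩⟩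
    · refine ⟨Sum.inr (xminus i), Or.inr (Or.inl rfl), ?_⟩
      ext w
      constructor
      · rintro ⟨(⟨c, hc, rfl⟩ | rfl | rfl), hadj⟩
        · obtain ⟨j, hj, hcj⟩ := hadj
          exact absurd (huniq c (i+1) i hc (xm_inj i j hj ▸ hcj)) (fin3_succ_ne i)
        · exact absurd hadj (no_mm i (i+1))
        · rfl
      · rintro rfl
        exact ⟨Or.inr (Or.inr rfl), ⟨i, Or.inl ⟨rfl, rfl⟩⟩⟩
end

section
/- Let G be a deeply critical oriented clique on n vertices with extending partition X1 ⊔ X2 ⊔ X3, and let G6 be its 6-extension. Then χo(G6 − x1⁻x2⁺) ≤ (n + 6) − 2, i.e., the oriented graph obtained from G6 by deleting the arc x1⁻x2⁺ admits an oriented (n+4)-colouring. -/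
private def ecol : Fin 6 → Fin 4 := ![0, 1, 2, 3, 0, 3]

private lemma ecol_plus_ne_minus : ∀ i j : Fin 3, (ecol (xplus i)).1 ≠ (ecol (xminus j)).1 := by
  decide

private lemma ecol_minus_ne_plus : ∀ i j : Fin 3, (ecol (xminus i)).1 ≠ (ecol (xplus j)).1 := by
  decide

private lemma ecol_extra : ∀ s t : Fin 6, extraAdj s t → (ecol s).1 ≠ (ecol t).1 := by
  decide

set_option synthInstance.maxSize 2000 in
set_option synthInstance.maxHeartbeats 1000000 in
set_option maxHeartbeats 2000000 in
private lemma ecol_main : ∀ s r q t : Fin 6, extraAdj s r → extraAdj q t →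
    ¬(s = xminus 0 ∧ r = xplus 1) → ¬(q = xminus 0 ∧ t = xplus 1) →
    (ecol s).1 = (ecol t).1 → (ecol r).1 ≠ (ecol q).1 := by
  decide

/-- deleting the arc `x₁⁻x₂⁺` from the 6-extension of a deeply critical
oriented clique on `n` vertices leaves oriented chromatic number at most `(n + 6) - 2`. -/
theorem stmt10 (n : ℕ) (G : OrientedGraph (Fin n)) (X : Fin 3 → Set (Fin n))
    (hG : G.IsDeeplyCriticalClique) (hX : G.IsExtendingPartition X) :
    ((sixExtension G X).deleteArc (Sum.inr (xminus 0)) (Sum.inr (xplus 1))).chromNum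
      ≤ (n + 6) - 2 := by
  set H := (sixExtension G X).deleteArc (Sum.inr (xminus 0)) (Sum.inr (xplus 1)) with hH
  have key : (n + 4) ∈ {k : ℕ | ∃ φ : (Fin n ⊕ Fin 6) → Fin k, H.IsColoring φ} := by
    refine ⟨fun a => Sum.rec (fun v => ⟨v.1, by have := v.isLt; omega⟩)
      (fun s => ⟨n + (ecol s).1, by have := (ecol s).isLt; omega⟩) a, ?_, ?_⟩
    · rintro x y ⟨hadj, -⟩
      rcases x with a | s <;> rcases y with b | t
      · -- G arc
        intro h
        have hab : a = b := by
          have := congrArg Fin.val h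
          simpa [Fin.ext_iff] using this
        exact G.irrefl a (hab ▸ hadj)
      · intro h
        have := congrArg Fin.val h
        simp only at this
        have := a.isLt
        omega
      · intro h
        have := congrArg Fin.val h
        simp only at this
        have := b.isLt
        omega
      · intro h
        have := congrArg Fin.val h
        simp only at this
        exact ecol_extra s t hadj (by omega)
    · rintro x y u v ⟨hxy, hdx⟩ ⟨huv, hdu⟩ hxv
      rcases x with a | s <;> rcases v with d | t
      · -- x = inl a, v = inl d : same G-colour means a = d
        have had : a = d := by
          have := congrArg Fin.val hxv
          simpa [Fin.ext_iff] using this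
        subst had
        rcases y with b | r <;> rcases u with c | q
        · -- G arcs a→b and c→a ; if b = c contradiction with antisymm
          intro h
          have hbc : b = c := by
            have := congrArg Fin.val h
            simpa [Fin.ext_iff] using this
          subst hbc
          exact G.antisymm a b hxy huv
        · intro h
          have := congrArg Fin.val h
          simp only at this
          have := b.isLt
          omega
        · intro h
          have := congrArg Fin.val h
          simp only at this
          have := c.isLt
          omega
        · -- a→x_i⁺ and x_j⁻→a : plus vs minus colours differ
          obtain ⟨i, hi, -⟩ := hxy
          obtain ⟨j, hj, -⟩ := huv
          intro h
          have := congrArg Fin.val h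
          simp only at this
          subst hi; subst hj
          exact ecol_plus_ne_minus i j (by omega)
      · -- x = inl a, v = inr t : impossible colour equality
        exfalso
        have := congrArg Fin.val hxv
        simp only at this
        have := a.isLt
        omega
      · exfalso
        have := congrArg Fin.val hxv
        simp only at this
        have := d.isLt
        omega
      · -- x = inr s, v = inr t
        have hst : (ecol s).1 = (ecol t).1 := by
          have := congrArg Fin.val hxv
          simp only at this
          omega
        rcases y with b | r <;> rcases u with c | q
        · -- x_i⁻→b and c→x_j⁺ : minus colour = plus colour impossible
          exfalso
          obtain ⟨i, hi, -⟩ := hxy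
          obtain ⟨j, hj, -⟩ := huv
          subst hi; subst hj
          exact ecol_minus_ne_plus i j hst
        · intro h
          have := congrArg Fin.val h
          simp only at this
          have := b.isLt
          omega
        · intro h
          have := congrArg Fin.val h
          simp only at this
          have := c.isLt
          omega
        · -- extra arcs s→r and q→t
          intro h
          have hrq : (ecol r).1 = (ecol q).1 := by
            have := congrArg Fin.val h
            simp only at this
            omega
          refine ecol_main s r q t hxy huv ?_ ?_ hst hrq
          · rintro ⟨h1, h2⟩
            exact hdx ⟨by rw [h1], by rw [h2]⟩
          · rintro ⟨h1, h2⟩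
            exact hdu ⟨by rw [h1], by rw [h2]⟩
  have := Nat.sInf_le key
  unfold OrientedGraph.chromNum
  omega
end

section
/- Let G be a deeply critical oriented clique on n vertices with extending partition X1 ⊔ X2 ⊔ X3, let G6 be its 6-extension, and let u ∈ X1. Then χo(G6 − x1⁻u) ≤ (n + 6) − 2, i.e., the oriented graph obtained from G6 by deleting the arc x1⁻u admits an oriented (n+4)-colouring. -/
/-- Auxiliary colouring values. -/
def psi (n : ℕ) (u v : Fin n) : (Fin n ⊕ Fin 6) → ℕ
  | Sum.inl w => w.1
  | Sum.inr s => if s.1 = 0 then v.1 else if s.1 = 5 then u.1 else n + s.1 - 1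

lemma psi_char {n : ℕ} {u v : Fin n} (hvu : v.1 ≠ u.1) (a b : Fin n ⊕ Fin 6)
    (h : psi n u v a = psi n u v b) :
    a = b ∨ (a = Sum.inl v ∧ b = Sum.inr (xminus 0)) ∨ (a = Sum.inr (xminus 0) ∧ b = Sum.inl v)
      ∨ (a = Sum.inl u ∧ b = Sum.inr (xplus 2)) ∨ (a = Sum.inr (xplus 2) ∧ b = Sum.inl u) := by
  have hv' := v.2
  have hu' := u.2
  rcases a with w | s <;> rcases b with w' | s'
  · exact Or.inl (congrArg Sum.inl (Fin.ext h))
  · fin_cases s' <;> simp [psi, Fin.ext_iff] at h ⊢ <;> omega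
  · fin_cases s <;> simp [psi, Fin.ext_iff] at h ⊢ <;> omega
  · fin_cases s <;> fin_cases s' <;> simp [psi, Fin.ext_iff] at h ⊢ <;> omega

lemma six_rl {V : Type} {G : OrientedGraph V} {X : Fin 3 → Set V} {s : Fin 6} {q : V} :
    (sixExtension G X).adj (Sum.inr s) (Sum.inl q) ↔ ∃ i : Fin 3, s = xminus i ∧ q ∈ X i :=
  Iff.rfl

lemma six_lr {V : Type} {G : OrientedGraph V} {X : Fin 3 → Set V} {p : V} {t : Fin 6} :
    (sixExtension G X).adj (Sum.inl p) (Sum.inr t) ↔ ∃ i : Fin 3, t = xplus i ∧ p ∈ X i :=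
  Iff.rfl

lemma six_ll {V : Type} {G : OrientedGraph V} {X : Fin 3 → Set V} {p q : V} :
    (sixExtension G X).adj (Sum.inl p) (Sum.inl q) ↔ G.adj p q := Iff.rfl

lemma six_rr {V : Type} {G : OrientedGraph V} {X : Fin 3 → Set V} {s t : Fin 6} :
    (sixExtension G X).adj (Sum.inr s) (Sum.inr t) ↔ extraAdj s t := Iff.rfl

/-- deleting an arc `x₁⁻u`, `u ∈ X₁`, from the 6-extension of a deeply
critical oriented clique on `n` vertices leaves oriented chromatic number at most
`(n + 6) - 2`. -/
theorem stmt11 (n : ℕ) (G : OrientedGraph (Fin n)) (X : Fin 3 → Set (Fin n))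
    (hG : G.IsDeeplyCriticalClique) (hX : G.IsExtendingPartition X)
    (u : Fin n) (hu : u ∈ X 0) :
    ((sixExtension G X).deleteArc (Sum.inr (xminus 0)) (Sum.inl u)).chromNum
      ≤ (n + 6) - 2 := by
  obtain ⟨hpart, hno, hiii, -⟩ := hX
  obtain ⟨v, hv1, hv2⟩ := hiii 0 u hu
  rw [show (0 : Fin 3) + 1 = 1 from by decide] at hv1
  have hkey : ∀ w, w ∈ X 0 → G.adj w v → w = u := by
    intro w h1 h2
    have hw : w ∈ ({u} : Set (Fin n)) := by rw [← hv2]; exact ⟨h1, h2⟩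
    simpa using hw
  have huniq : ∀ (w : Fin n) (i j : Fin 3), w ∈ X i → w ∈ X j → i = j := by
    intro w i j hi hj
    obtain ⟨k, -, hk⟩ := hpart w
    exact (hk i hi).trans (hk j hj).symm
  have h10 : ∀ p, p ∈ X 1 → ∀ q, q ∈ X 0 → ¬ G.adj p q := by
    have h := hno 0
    rw [show (0 : Fin 3) + 1 = 1 from by decide] at h
    exact h
  have h02 : ∀ p, p ∈ X 0 → ∀ q, q ∈ X 2 → ¬ G.adj p q := by
    have h := hno 2
    rw [show (2 : Fin 3) + 1 = 0 from by decide] at h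
    exact h
  have hvu : v.1 ≠ u.1 := by
    intro h
    have hvu' : v = u := Fin.ext h
    rw [hvu'] at hv1
    exact absurd (huniq u 1 0 hv1 hu) (by decide)
  have hbound : ∀ a, psi n u v a < n + 4 := by
    rintro (w | s)
    · have := w.2
      simp only [psi]
      omega
    · have hv' := v.2
      have hu' := u.2
      have hs := s.2
      simp only [psi]
      split_ifs <;> omega
  have hcol : (n + 4) ∈ {k : ℕ | ∃ φ : (Fin n ⊕ Fin 6) → Fin k,
      ((sixExtension G X).deleteArc (Sum.inr (xminus 0)) (Sum.inl u)).IsColoring φ} := by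
    refine ⟨fun a => ⟨psi n u v a, hbound a⟩, ?_, ?_⟩
    · intro a b hab hfe
      have h : psi n u v a = psi n u v b := congrArg Fin.val hfe
      rcases psi_char hvu a b h with rfl | ⟨rfl, rfl⟩ | ⟨rfl, rfl⟩ | ⟨rfl, rfl⟩ | ⟨rfl, rfl⟩
      · exact ((sixExtension G X).deleteArc (Sum.inr (xminus 0)) (Sum.inl u)).irrefl a hab
      · obtain ⟨i, hi, -⟩ := six_lr.mp hab.1
        exact (by decide : ∀ j : Fin 3, (xminus 0 : Fin 6) ≠ xplus j) i hi
      · obtain ⟨i, hi, hm⟩ := six_rl.mp hab.1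
        have hi0 : i = 0 := (by decide : ∀ j : Fin 3, (xminus 0 : Fin 6) = xminus j → j = 0) i hi
        rw [hi0] at hm
        exact absurd (huniq v 0 1 hm hv1) (by decide)
      · obtain ⟨i, hi, hm⟩ := six_lr.mp hab.1
        have hi2 : i = 2 := (by decide : ∀ j : Fin 3, (xplus 2 : Fin 6) = xplus j → j = 2) i hi
        rw [hi2] at hm
        exact absurd (huniq u 0 2 hu hm) (by decide)
      · obtain ⟨i, hi, -⟩ := six_rl.mp hab.1
        exact (by decide : ∀ j : Fin 3, (xplus 2 : Fin 6) ≠ xminus j) i hi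
    · intro a b c d hab hcd heq hne
      have h1 : psi n u v a = psi n u v d := congrArg Fin.val heq
      have h2 : psi n u v b = psi n u v c := congrArg Fin.val hne
      rcases psi_char hvu a d h1 with rfl | ⟨rfl, rfl⟩ | ⟨rfl, rfl⟩ | ⟨rfl, rfl⟩ | ⟨rfl, rfl⟩
      · -- a = d
        rcases psi_char hvu b c h2 with rfl | ⟨rfl, rfl⟩ | ⟨rfl, rfl⟩ | ⟨rfl, rfl⟩ | ⟨rfl, rfl⟩
        · exact ((sixExtension G X).deleteArc (Sum.inr (xminus 0)) (Sum.inl u)).antisymm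
            a b hab hcd
        · -- b = inl v, c = inr (xminus 0)
          rcases a with w | t
          · obtain ⟨i, hi, hm⟩ := six_rl.mp hcd.1
            have hi0 : i = 0 :=
              (by decide : ∀ j : Fin 3, (xminus 0 : Fin 6) = xminus j → j = 0) i hi
            rw [hi0] at hm
            have hwu : w ≠ u := fun h => hcd.2 ⟨rfl, by rw [h]⟩
            exact hwu (hkey w hm (six_ll.mp hab.1))
          · have ht : t = xplus 1 :=
              (by decide : ∀ t : Fin 6, extraAdj (xminus 0) t → t = xplus 1) t (six_rr.mp hcd.1)
            rw [ht] at hab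
            obtain ⟨i, hi, -⟩ := six_rl.mp hab.1
            exact (by decide : ∀ j : Fin 3, (xplus 1 : Fin 6) ≠ xminus j) i hi
        · -- b = inr (xminus 0), c = inl v
          rcases a with w | t
          · obtain ⟨i, hi, -⟩ := six_lr.mp hab.1
            exact (by decide : ∀ j : Fin 3, (xminus 0 : Fin 6) ≠ xplus j) i hi
          · have ht : t = xplus 2 :=
              (by decide : ∀ t : Fin 6, extraAdj t (xminus 0) → t = xplus 2) t (six_rr.mp hab.1)
            rw [ht] at hcd
            obtain ⟨i, hi, hm⟩ := six_lr.mp hcd.1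
            have hi2 : i = 2 :=
              (by decide : ∀ j : Fin 3, (xplus 2 : Fin 6) = xplus j → j = 2) i hi
            rw [hi2] at hm
            exact absurd (huniq v 1 2 hv1 hm) (by decide)
        · -- b = inl u, c = inr (xplus 2)
          rcases a with w | t
          · obtain ⟨i, hi, -⟩ := six_rl.mp hcd.1
            exact (by decide : ∀ j : Fin 3, (xplus 2 : Fin 6) ≠ xminus j) i hi
          · have ht : t = xminus 0 :=
              (by decide : ∀ t : Fin 6, extraAdj (xplus 2) t → t = xminus 0) t (six_rr.mp hcd.1)
            rw [ht] at hab
            exact hab.2 ⟨rfl, rfl⟩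
        · -- b = inr (xplus 2), c = inl u
          rcases a with w | t
          · obtain ⟨i, hi, hm⟩ := six_lr.mp hab.1
            have hi2 : i = 2 :=
              (by decide : ∀ j : Fin 3, (xplus 2 : Fin 6) = xplus j → j = 2) i hi
            rw [hi2] at hm
            exact h02 u hu w hm (six_ll.mp hcd.1)
          · have ht : t = xminus 1 :=
              (by decide : ∀ t : Fin 6, extraAdj t (xplus 2) → t = xminus 1) t (six_rr.mp hab.1)
            rw [ht] at hcd
            obtain ⟨i, hi, -⟩ := six_lr.mp hcd.1
            exact (by decide : ∀ j : Fin 3, (xminus 1 : Fin 6) ≠ xplus j) i hi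
      · -- a = inl v, d = inr (xminus 0)
        rcases psi_char hvu b c h2 with rfl | ⟨rfl, rfl⟩ | ⟨rfl, rfl⟩ | ⟨rfl, rfl⟩ | ⟨rfl, rfl⟩
        · rcases b with w | t
          · obtain ⟨i, hi, -⟩ := six_lr.mp hcd.1
            exact (by decide : ∀ j : Fin 3, (xminus 0 : Fin 6) ≠ xplus j) i hi
          · have ht : t = xplus 2 :=
              (by decide : ∀ t : Fin 6, extraAdj t (xminus 0) → t = xplus 2) t (six_rr.mp hcd.1)
            rw [ht] at hab
            obtain ⟨i, hi, hm⟩ := six_lr.mp hab.1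
            have hi2 : i = 2 :=
              (by decide : ∀ j : Fin 3, (xplus 2 : Fin 6) = xplus j → j = 2) i hi
            rw [hi2] at hm
            exact absurd (huniq v 1 2 hv1 hm) (by decide)
        · exact (by decide : ¬ extraAdj (xminus 0) (xminus 0)) (six_rr.mp hcd.1)
        · obtain ⟨i, hi, -⟩ := six_lr.mp hab.1
          exact (by decide : ∀ j : Fin 3, (xminus 0 : Fin 6) ≠ xplus j) i hi
        · exact h10 v hv1 u hu (six_ll.mp hab.1)
        · obtain ⟨i, hi, -⟩ := six_lr.mp hcd.1
          exact (by decide : ∀ j : Fin 3, (xminus 0 : Fin 6) ≠ xplus j) i hi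
      · -- a = inr (xminus 0), d = inl v
        rcases psi_char hvu b c h2 with rfl | ⟨rfl, rfl⟩ | ⟨rfl, rfl⟩ | ⟨rfl, rfl⟩ | ⟨rfl, rfl⟩
        · rcases b with w | t
          · obtain ⟨i, hi, hm⟩ := six_rl.mp hab.1
            have hi0 : i = 0 :=
              (by decide : ∀ j : Fin 3, (xminus 0 : Fin 6) = xminus j → j = 0) i hi
            rw [hi0] at hm
            have hwu : w ≠ u := fun h => hab.2 ⟨rfl, by rw [h]⟩
            exact hwu (hkey w hm (six_ll.mp hcd.1))
          · have ht : t = xplus 1 :=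
              (by decide : ∀ t : Fin 6, extraAdj (xminus 0) t → t = xplus 1) t (six_rr.mp hab.1)
            rw [ht] at hcd
            obtain ⟨i, hi, -⟩ := six_rl.mp hcd.1
            exact (by decide : ∀ j : Fin 3, (xplus 1 : Fin 6) ≠ xminus j) i hi
        · obtain ⟨i, hi, hm⟩ := six_rl.mp hab.1
          have hi0 : i = 0 :=
            (by decide : ∀ j : Fin 3, (xminus 0 : Fin 6) = xminus j → j = 0) i hi
          rw [hi0] at hm
          exact absurd (huniq v 0 1 hm hv1) (by decide)
        · exact (by decide : ¬ extraAdj (xminus 0) (xminus 0)) (six_rr.mp hab.1)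
        · exact hab.2 ⟨rfl, rfl⟩
        · exact (by decide : ¬ extraAdj (xminus 0) (xplus 2)) (six_rr.mp hab.1)
      · -- a = inl u, d = inr (xplus 2)
        rcases psi_char hvu b c h2 with rfl | ⟨rfl, rfl⟩ | ⟨rfl, rfl⟩ | ⟨rfl, rfl⟩ | ⟨rfl, rfl⟩
        · rcases b with w | t
          · obtain ⟨i, hi, hm⟩ := six_lr.mp hcd.1
            have hi2 : i = 2 :=
              (by decide : ∀ j : Fin 3, (xplus 2 : Fin 6) = xplus j → j = 2) i hi
            rw [hi2] at hm
            exact h02 u hu w hm (six_ll.mp hab.1)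
          · obtain ⟨i, hi, hm⟩ := six_lr.mp hab.1
            have hi0 : i = 0 := huniq u i 0 hm hu
            rw [hi0] at hi
            rw [hi] at hcd
            exact (by decide : ¬ extraAdj (xplus 0) (xplus 2)) (six_rr.mp hcd.1)
        · exact (by decide : ¬ extraAdj (xminus 0) (xplus 2)) (six_rr.mp hcd.1)
        · obtain ⟨i, hi, -⟩ := six_lr.mp hab.1
          exact (by decide : ∀ j : Fin 3, (xminus 0 : Fin 6) ≠ xplus j) i hi
        · exact G.irrefl u (six_ll.mp hab.1)
        · obtain ⟨i, hi, hm⟩ := six_lr.mp hab.1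
          have hi2 : i = 2 :=
            (by decide : ∀ j : Fin 3, (xplus 2 : Fin 6) = xplus j → j = 2) i hi
          rw [hi2] at hm
          exact absurd (huniq u 0 2 hu hm) (by decide)
      · -- a = inr (xplus 2), d = inl u
        rcases psi_char hvu b c h2 with rfl | ⟨rfl, rfl⟩ | ⟨rfl, rfl⟩ | ⟨rfl, rfl⟩ | ⟨rfl, rfl⟩
        · rcases b with w | t
          · obtain ⟨i, hi, -⟩ := six_rl.mp hab.1
            exact (by decide : ∀ j : Fin 3, (xplus 2 : Fin 6) ≠ xminus j) i hi
          · have ht : t = xminus 0 :=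
              (by decide : ∀ t : Fin 6, extraAdj (xplus 2) t → t = xminus 0) t (six_rr.mp hab.1)
            rw [ht] at hcd
            exact hcd.2 ⟨rfl, rfl⟩
        · exact hcd.2 ⟨rfl, rfl⟩
        · exact h10 v hv1 u hu (six_ll.mp hcd.1)
        · obtain ⟨i, hi, -⟩ := six_rl.mp hab.1
          exact (by decide : ∀ j : Fin 3, (xplus 2 : Fin 6) ≠ xminus j) i hi
        · exact (by decide : ¬ extraAdj (xplus 2) (xplus 2)) (six_rr.mp hab.1)
  have hle : ((sixExtension G X).deleteArc (Sum.inr (xminus 0)) (Sum.inl u)).chromNum ≤ n + 4 :=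
    Nat.sInf_le hcol
  exact hle.trans (by omega)
end

section
/- The oriented graph H on vertex set {0,1,2,3,4,5,6,7,8} whose arcs are exactly 5→8, 8→2, 2→5, 2→7, 6→2, 8→3, 4→8, 0→5, 5→1, 7→0, 1→4, 3→6, 0→3, 4→7 and 6→1 is a deeply critical oriented clique on 9 vertices. -/
/-- The arcs of the example oriented graph `H` on 9 vertices. -/
def Harcs : List (Fin 9 × Fin 9) :=
  [(5, 8), (8, 2), (2, 5), (2, 7), (6, 2), (8, 3), (4, 8), (0, 5), (5, 1), (7, 0),
   (1, 4), (3, 6), (0, 3), (4, 7), (6, 1)]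

/-- The example oriented graph `H` on 9 vertices. -/
def H : OrientedGraph (Fin 9) where
  adj i j := (i, j) ∈ Harcs
  irrefl := by decide
  antisymm := by decide


open OrientedGraph

instance : DecidableRel H.adj := fun a b => inferInstanceAs (Decidable ((a, b) ∈ Harcs))

instance (x y : Fin 9) : DecidableRel ((H.deleteArc x y).adj) := fun a b =>
  inferInstanceAs (Decidable (H.adj a b ∧ ¬(a = x ∧ b = y)))

lemma id_coloring {n : ℕ} (G : OrientedGraph (Fin n)) :
    G.IsColoring (id : Fin n → Fin n) := by
  constructor
  · intro x y h he
    simp only [id] at he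
    subst he
    exact G.irrefl x h
  · intro x y u v h1 h2 he he2
    simp only [id] at he he2
    subst he; subst he2
    exact G.antisymm _ _ h1 h2

lemma coloring_ne {V : Type} {k : ℕ} {G : OrientedGraph V} {φ : V → Fin k}
    (hφ : G.IsColoring φ) {u v : V}
    (h : G.adj u v ∨ G.adj v u ∨
      ∃ w, (G.adj u w ∧ G.adj w v) ∨ (G.adj v w ∧ G.adj w u)) : φ u ≠ φ v := by
  obtain ⟨h1, h2⟩ := hφ
  rcases h with h | h | ⟨w, ⟨ha, hb⟩ | ⟨ha, hb⟩⟩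
  · exact h1 _ _ h
  · exact fun he => h1 _ _ h he.symm
  · exact fun he => h2 u w w v ha hb he rfl
  · exact fun he => h2 v w w u ha hb he.symm rfl

lemma chrom_le {V : Type} (G : OrientedGraph V) {k : ℕ} (φ : V → Fin k)
    (h : G.IsColoring φ) : G.chromNum ≤ k :=
  Nat.sInf_le ⟨φ, h⟩

lemma chrom_ge {n : ℕ} (G : OrientedGraph (Fin n)) {c : ℕ} (e : Fin c → Fin n)
    (he : Function.Injective e)
    (hl : ∀ i j, i ≠ j → G.adj (e i) (e j) ∨ G.adj (e j) (e i) ∨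
      ∃ w, (G.adj (e i) w ∧ G.adj w (e j)) ∨ (G.adj (e j) w ∧ G.adj w (e i))) :
    c ≤ G.chromNum := by
  have hne : {k : ℕ | ∃ φ : Fin n → Fin k, G.IsColoring φ}.Nonempty :=
    ⟨n, id, id_coloring G⟩
  apply le_csInf hne
  rintro k ⟨φ, hφ⟩
  have hinj : Function.Injective (φ ∘ e) := by
    intro i j h
    by_contra hne
    exact coloring_ne hφ (hl i j hne) h
  simpa using Fintype.card_le_of_injective _ hinj

lemma isColoring_of {x y : Fin 9} {k : ℕ} (φ : Fin 9 → Fin k)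
    (h1 : ∀ p ∈ Harcs, ¬(p.1 = x ∧ p.2 = y) → φ p.1 ≠ φ p.2)
    (h2 : ∀ p ∈ Harcs, ∀ q ∈ Harcs, ¬(p.1 = x ∧ p.2 = y) → ¬(q.1 = x ∧ q.2 = y) →
      φ p.1 = φ q.2 → φ p.2 ≠ φ q.1) :
    (H.deleteArc x y).IsColoring φ := by
  constructor
  · rintro a b ⟨hab, hne⟩
    exact h1 (a, b) hab hne
  · rintro a b u v ⟨hab, hne1⟩ ⟨huv, hne2⟩
    exact h2 (a, b) hab (u, v) huv hne1 hne2

lemma eq7 (x y : Fin 9) (φ : Fin 9 → Fin 7) (hφ : (H.deleteArc x y).IsColoring φ)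
    (e : Fin 7 → Fin 9) (he : Function.Injective e)
    (hl : ∀ i j, i ≠ j → (H.deleteArc x y).adj (e i) (e j) ∨
      (H.deleteArc x y).adj (e j) (e i) ∨
      ∃ w, ((H.deleteArc x y).adj (e i) w ∧ (H.deleteArc x y).adj w (e j)) ∨
        ((H.deleteArc x y).adj (e j) w ∧ (H.deleteArc x y).adj w (e i))) :
    (H.deleteArc x y).chromNum = 7 :=
  le_antisymm (chrom_le _ φ hφ) (chrom_ge _ e he hl)

lemma chromH : H.chromNum = 9 := by
  refine le_antisymm (chrom_le H id (id_coloring H)) (chrom_ge H id Function.injective_id ?_)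
  decide

set_option maxHeartbeats 1000000 in
/-- `H` is a deeply critical oriented clique on 9 vertices. -/
theorem stmt14 : H.IsDeeplyCriticalClique := by
  constructor
  · intro x y h
    rw [chromH]
    change (x, y) ∈ Harcs at h
    simp only [Harcs, List.mem_cons, List.not_mem_nil, or_false, Prod.mk.injEq] at h
    rcases h with ⟨rfl, rfl⟩|⟨rfl, rfl⟩|⟨rfl, rfl⟩|⟨rfl, rfl⟩|⟨rfl, rfl⟩|⟨rfl, rfl⟩|⟨rfl, rfl⟩|⟨rfl, rfl⟩|⟨rfl, rfl⟩|⟨rfl, rfl⟩|⟨rfl, rfl⟩|⟨rfl, rfl⟩|⟨rfl, rfl⟩|⟨rfl, rfl⟩|⟨rfl, rfl⟩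
    · exact eq7 5 8 ![0,1,2,3,4,3,5,6,0] (isColoring_of _ (by decide) (by decide)) ![0,1,2,3,4,6,7] (by decide) (by decide)
    · exact eq7 8 2 ![0,1,2,3,2,4,5,6,6] (isColoring_of _ (by decide) (by decide)) ![0,1,3,4,5,6,7] (by decide) (by decide)
    · exact eq7 2 5 ![0,1,1,2,3,4,4,5,6] (isColoring_of _ (by decide) (by decide)) ![0,1,3,4,6,7,8] (by decide) (by decide)
    · exact eq7 2 7 ![0,1,0,2,3,4,5,5,6] (isColoring_of _ (by decide) (by decide)) ![0,1,3,4,5,6,8] (by decide) (by decide)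
    · exact eq7 6 2 ![0,1,2,2,3,4,4,5,6] (isColoring_of _ (by decide) (by decide)) ![0,1,3,4,5,7,8] (by decide) (by decide)
    · exact eq7 8 3 ![0,1,2,3,3,4,5,6,5] (isColoring_of _ (by decide) (by decide)) ![0,1,2,4,5,6,7] (by decide) (by decide)
    · exact eq7 4 8 ![0,1,2,3,2,4,5,6,1] (isColoring_of _ (by decide) (by decide)) ![0,1,2,3,5,6,7] (by decide) (by decide)
    · exact eq7 0 5 ![0,0,1,2,3,4,5,4,6] (isColoring_of _ (by decide) (by decide)) ![1,2,3,4,6,7,8] (by decide) (by decide)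
    · exact eq7 5 1 ![0,0,1,2,3,3,4,5,6] (isColoring_of _ (by decide) (by decide)) ![0,2,3,4,6,7,8] (by decide) (by decide)
    · exact eq7 7 0 ![0,1,0,2,3,4,5,2,6] (isColoring_of _ (by decide) (by decide)) ![1,2,3,4,5,6,8] (by decide) (by decide)
    · exact eq7 1 4 ![0,1,2,3,4,4,5,1,6] (isColoring_of _ (by decide) (by decide)) ![0,2,3,5,6,7,8] (by decide) (by decide)
    · exact eq7 3 6 ![0,1,2,1,3,4,0,5,6] (isColoring_of _ (by decide) (by decide)) ![0,1,2,4,5,7,8] (by decide) (by decide)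
    · exact eq7 0 3 ![0,1,2,3,4,5,0,3,6] (isColoring_of _ (by decide) (by decide)) ![1,2,4,5,6,7,8] (by decide) (by decide)
    · exact eq7 4 7 ![0,1,2,3,0,4,5,1,6] (isColoring_of _ (by decide) (by decide)) ![0,1,2,3,5,6,8] (by decide) (by decide)
    · exact eq7 6 1 ![0,1,2,1,3,4,3,5,6] (isColoring_of _ (by decide) (by decide)) ![0,2,3,4,5,7,8] (by decide) (by decide)
  · show H.chromNum = Nat.card (Fin 9)
    rw [chromH]
    simp
end

section
/- For every oriented graph G and every arc xy of G, χo(G) ≤ χo(G − xy) + 2; that is, removing a single arc decreases the oriented chromatic number by at most 2. -/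
lemma coloring_set_nonempty {V : Type} [Finite V] (G : OrientedGraph V) :
    {k : ℕ | ∃ φ : V → Fin k, G.IsColoring φ}.Nonempty := by
  obtain ⟨n, ⟨e⟩⟩ := Finite.exists_equiv_fin V
  refine ⟨n, e, ?_, ?_⟩
  · intro a b hab hne
    exact G.irrefl a (e.injective hne ▸ hab)
  · intro a b u v hab huv hav hbu
    have hav' : a = v := e.injective hav
    have hbu' : b = u := e.injective hbu
    exact G.antisymm a b hab (hbu' ▸ hav' ▸ huv)

/-- removing a single arc decreases the oriented chromatic number by at
most 2. -/
theorem stmt16 {V : Type} [Finite V] (G : OrientedGraph V) (x y : V) (h : G.adj x y) :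
    G.chromNum ≤ (G.deleteArc x y).chromNum + 2 := by
  classical
  have hxy : x ≠ y := fun e => G.irrefl x (e ▸ h)
  obtain ⟨φ, hφ1, hφ2⟩ := Nat.sInf_mem (coloring_set_nonempty (G.deleteArc x y))
  set k := (G.deleteArc x y).chromNum with hk
  have hφk : ∀ v, (φ v).1 < k := fun v => (φ v).2
  -- new coloring
  set ψ : V → Fin (k + 2) := fun v =>
    if v = x then ⟨k, by omega⟩ else if v = y then ⟨k + 1, by omega⟩
    else ⟨(φ v).1, by have := hφk v; omega⟩ with hψ
  have hval : ∀ v, v ≠ x → v ≠ y → (ψ v).1 = (φ v).1 := by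
    intro v hvx hvy; simp [hψ, hvx, hvy]
  have hlt : ∀ v, v ≠ x → v ≠ y → (ψ v).1 < k := by
    intro v hvx hvy; rw [hval v hvx hvy]; exact hφk v
  have hx : (ψ x).1 = k := by simp [hψ]
  have hy : (ψ y).1 = k + 1 := by simp [hψ, hxy.symm]
  -- characterize equality of ψ values
  have key : ∀ a b : V, ψ a = ψ b →
      (a = x ∧ b = x) ∨ (a = y ∧ b = y) ∨ (a ≠ x ∧ a ≠ y ∧ b ≠ x ∧ b ≠ y ∧ φ a = φ b) := by
    intro a b hab
    have hab' : (ψ a).1 = (ψ b).1 := congrArg Fin.val hab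
    by_cases hax : a = x
    · by_cases hbx : b = x
      · exact Or.inl ⟨hax, hbx⟩
      · by_cases hby : b = y
        · rw [hax, hby, hx, hy] at hab'; omega
        · have := hlt b hbx hby; rw [hax, hx] at hab'; omega
    · by_cases hay : a = y
      · by_cases hbx : b = x
        · rw [hay, hbx, hx, hy] at hab'; omega
        · by_cases hby : b = y
          · exact Or.inr (Or.inl ⟨hay, hby⟩)
          · have := hlt b hbx hby; rw [hay, hy] at hab'; omega
      · by_cases hbx : b = x
        · have := hlt a hax hay; rw [hbx, hx] at hab'; omega
        · by_cases hby : b = y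
          · have := hlt a hax hay; rw [hby, hy] at hab'; omega
          · rw [hval a hax hay, hval b hbx hby] at hab'
            exact Or.inr (Or.inr ⟨hax, hay, hbx, hby, Fin.ext hab'⟩)
  -- arcs not touching the deleted pair survive
  have surv : ∀ a b : V, G.adj a b → ¬(a = x ∧ b = y) → (G.deleteArc x y).adj a b :=
    fun a b hab hn => ⟨hab, hn⟩
  have hcol : G.IsColoring ψ := by
    constructor
    · intro a b hab heq
      rcases key a b heq with ⟨ha, hb⟩ | ⟨ha, hb⟩ | ⟨hax, hay, hbx, hby, hab'⟩
      · rw [ha, hb] at hab; exact G.irrefl x hab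
      · rw [ha, hb] at hab; exact G.irrefl y hab
      · exact hφ1 a b (surv a b hab (fun hp => hax hp.1)) hab'
    · intro a b u v hab huv hav hbu
      rcases key a v hav with ⟨ha, hv⟩ | ⟨ha, hv⟩ | ⟨hax, hay, hvx, hvy, hav'⟩
      · -- a = x, v = x
        rw [ha] at hab; rw [hv] at huv
        rcases key b u hbu with ⟨hb, hu⟩ | ⟨hb, hu⟩ | ⟨hbx, hby, hux, huy, hbu'⟩
        · rw [hb] at hab; exact G.irrefl x hab
        · rw [hu] at huv; exact G.antisymm x y h huv
        · have h1 : (G.deleteArc x y).adj x b := surv x b hab (fun hp => hby hp.2)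
          have h2 : (G.deleteArc x y).adj u x := surv u x huv (fun hp => hux hp.1)
          exact hφ2 x b u x h1 h2 rfl hbu'
      · -- a = y, v = y
        rw [ha] at hab; rw [hv] at huv
        rcases key b u hbu with ⟨hb, hu⟩ | ⟨hb, hu⟩ | ⟨hbx, hby, hux, huy, hbu'⟩
        · rw [hb] at hab; exact G.antisymm x y h hab
        · rw [hu] at huv; exact G.irrefl y huv
        · have h1 : (G.deleteArc x y).adj y b := surv y b hab (fun hp => hxy hp.1.symm)
          have h2 : (G.deleteArc x y).adj u y := surv u y huv (fun hp => hux hp.1)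
          exact hφ2 y b u y h1 h2 rfl hbu'
      · rcases key b u hbu with ⟨hb, hu⟩ | ⟨hb, hu⟩ | ⟨hbx, hby, hux, huy, hbu'⟩
        · rw [hb] at hab; rw [hu] at huv
          have h1 : (G.deleteArc x y).adj a x := surv a x hab (fun hp => hax hp.1)
          have h2 : (G.deleteArc x y).adj x v := surv x v huv (fun hp => hvy hp.2)
          exact hφ2 a x x v h1 h2 hav' rfl
        · rw [hb] at hab; rw [hu] at huv
          have h1 : (G.deleteArc x y).adj a y := surv a y hab (fun hp => hax hp.1)
          have h2 : (G.deleteArc x y).adj y v := surv y v huv (fun hp => hxy hp.1.symm)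
          exact hφ2 a y y v h1 h2 hav' rfl
        · have h1 : (G.deleteArc x y).adj a b := surv a b hab (fun hp => hax hp.1)
          have h2 : (G.deleteArc x y).adj u v := surv u v huv (fun hp => hux hp.1)
          exact hφ2 a b u v h1 h2 hav' hbu'
  exact Nat.sInf_le ⟨ψ, hcol⟩
end

section
/- An oriented graph G is an absolute oriented clique if and only if every pair of distinct non-adjacent vertices of G is connected by a 2-dipath in at least one direction. -/
section Aux
variable {V : Type} [Finite V] (G : OrientedGraph V)

omit [Finite V] in
/-- Any injective map is an oriented coloring. -/
lemma injective_isColoring {k : ℕ} (φ : V → Fin k) (hφ : Function.Injective φ) :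
    G.IsColoring φ := by
  constructor
  · intro x y hxy h
    exact G.irrefl x (hφ h ▸ hxy)
  · intro x y u v hxy huv hxv hyu
    have hx : x = v := hφ hxv
    have hy : y = u := hφ hyu
    subst hx; subst hy; exact G.antisymm _ _ hxy huv

lemma coloring_card_exists : ∃ φ : V → Fin (Nat.card V), G.IsColoring φ :=
  ⟨Finite.equivFin V, injective_isColoring G _ (Finite.equivFin V).injective⟩

lemma chromNum_le_card : G.chromNum ≤ Nat.card V :=
  Nat.sInf_le (coloring_card_exists G)

end Aux

/-- an oriented graph is an absolute oriented clique iff every pair of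
distinct non-adjacent vertices is connected by a 2-dipath in at least one direction. -/
theorem stmt17 {V : Type} [Finite V] (G : OrientedGraph V) :
    G.IsAbsoluteClique ↔
      ∀ u v : V, u ≠ v → ¬ G.adj u v → ¬ G.adj v u →
        (∃ w, G.adj u w ∧ G.adj w v) ∨ (∃ w, G.adj v w ∧ G.adj w u) := by
  classical
  constructor
  · intro hcl u v hne hadj1 hadj2
    by_contra hcon
    push_neg at hcon
    obtain ⟨h1, h2⟩ := hcon
    -- build a coloring with `Nat.card V - 1` colors
    have hcard : Nat.card {w : V // w ≠ v} = Nat.card V - 1 := by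
      have : Fintype V := Fintype.ofFinite V
      simp only [Nat.card_eq_fintype_card, ne_eq]
      rw [Fintype.card_subtype_compl, Fintype.card_subtype_eq]
    let e : {w : V // w ≠ v} ≃ Fin (Nat.card V - 1) := Finite.equivFinOfCardEq hcard
    let r : V → {w : V // w ≠ v} := fun x => if h : x = v then ⟨u, hne⟩ else ⟨x, h⟩
    have hkey : ∀ x y : V, r x = r y →
        x = y ∨ (x = v ∧ y = u) ∨ (x = u ∧ y = v) := by
      intro x y hxy
      by_cases hx : x = v <;> by_cases hy : y = v
      · left; rw [hx, hy]
      · simp only [r, dif_pos hx, dif_neg hy, Subtype.mk.injEq] at hxy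
        right; left; exact ⟨hx, hxy.symm⟩
      · simp only [r, dif_neg hx, dif_pos hy, Subtype.mk.injEq] at hxy
        right; right; exact ⟨hxy, hy⟩
      · simp only [r, dif_neg hx, dif_neg hy, Subtype.mk.injEq] at hxy
        left; exact hxy
    let φ : V → Fin (Nat.card V - 1) := fun x => e (r x)
    have hkeyφ : ∀ x y : V, φ x = φ y →
        x = y ∨ (x = v ∧ y = u) ∨ (x = u ∧ y = v) := by
      intro x y hxy
      exact hkey x y (e.injective hxy)
    have hcol : G.IsColoring φ := by
      constructor
      · intro x y hxy heq
        rcases hkeyφ x y heq with h | ⟨hx, hy⟩ | ⟨hx, hy⟩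
        · exact G.irrefl x (h ▸ hxy)
        · subst hx; subst hy; exact hadj2 hxy
        · subst hx; subst hy; exact hadj1 hxy
      · intro a b c d hab hcd had hbc
        rcases hkeyφ a d had with h | ⟨ha, hd⟩ | ⟨ha, hd⟩ <;>
          rcases hkeyφ b c hbc with h' | ⟨hb, hc⟩ | ⟨hb, hc⟩
        · subst h; subst h'; exact G.antisymm _ _ hab hcd
        · subst h; subst hb; subst hc; exact h1 _ hcd hab
        · subst h; subst hb; subst hc; exact h2 _ hcd hab
        · subst ha; subst hd; subst h'; exact h2 _ hab hcd
        · subst ha; subst hd; subst hb; subst hc; exact G.irrefl _ hab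
        · subst ha; subst hd; subst hb; subst hc; exact hadj2 hab
        · subst ha; subst hd; subst h'; exact h1 _ hab hcd
        · subst ha; subst hd; subst hb; subst hc; exact hadj1 hab
        · subst ha; subst hd; subst hb; subst hc; exact G.irrefl _ hab
    have hle : G.chromNum ≤ Nat.card V - 1 := Nat.sInf_le ⟨φ, hcol⟩
    have h2card : 2 ≤ Nat.card V := Finite.one_lt_card_iff_nontrivial.mpr ⟨u, v, hne⟩
    rw [OrientedGraph.IsAbsoluteClique] at hcl
    omega
  · intro hyp
    refine le_antisymm (chromNum_le_card G) ?_
    refine le_csInf ⟨_, coloring_card_exists G⟩ ?_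
    rintro k ⟨φ, hcol⟩
    have hinj : Function.Injective φ := by
      intro x y heq
      by_contra hne
      by_cases hxy : G.adj x y
      · exact hcol.1 x y hxy heq
      by_cases hyx : G.adj y x
      · exact hcol.1 y x hyx heq.symm
      rcases hyp x y hne hxy hyx with ⟨w, hw1, hw2⟩ | ⟨w, hw1, hw2⟩
      · exact hcol.2 x w w y hw1 hw2 heq rfl
      · exact hcol.2 y w w x hw1 hw2 heq.symm rfl
    calc Nat.card V ≤ Nat.card (Fin k) := Nat.card_le_card_of_injective φ hinj
      _ = k := by simp
end

section
/- For every integer m ≥ 1, there exists a deeply critical oriented clique on 2·3^m − 1 vertices. -/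
/-- every base-3 digit of `j` is at most 1 -/
def Good (j : ℕ) : Prop := ∀ k, j / 3^k % 3 ≤ 1

lemma good_zero : Good 0 := fun k => by simp

lemma good_mod {j : ℕ} (h : Good j) : j % 3 ≤ 1 := by simpa using h 0

lemma good_div3 {j : ℕ} (h : Good j) : Good (j / 3) := by
  intro k
  rw [Nat.div_div_eq_div_mul]
  have := h (k+1)
  rwa [pow_succ'] at this

lemma good_of {j : ℕ} (h0 : j % 3 ≤ 1) (h : Good (j / 3)) : Good j := by
  intro k
  cases k with
  | zero => simpa using h0
  | succ k =>
    have := h k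
    rwa [Nat.div_div_eq_div_mul, ← pow_succ'] at this

lemma good_mul3_add {x e : ℕ} (h : Good x) (he : e ≤ 1) : Good (3 * x + e) := by
  apply good_of
  · omega
  · have h3 : (3 * x + e) / 3 = x := by omega
    rwa [h3]

lemma good_double_bound {d : ℕ} (h : Good d) : ∀ m, d < 3^m → 2 * d < 3^m := by
  induction d using Nat.strong_induction_on with
  | _ d ih =>
    intro m hd
    cases m with
    | zero => omega
    | succ m =>
      have h1 : d % 3 ≤ 1 := good_mod h
      have h3 : (3:ℕ)^(m+1) = 3 * 3^m := by ring
      rcases Nat.eq_zero_or_pos d with rfl | hd0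
      · positivity
      have := ih (d/3) (by omega) (good_div3 h) m (by omega)
      omega

lemma not_good_double {d : ℕ} (hd : 0 < d) (h : Good d) : ¬ Good (2 * d) := by
  induction d using Nat.strong_induction_on with
  | _ d ih =>
    intro hg
    rcases Nat.lt_or_ge (d % 3) 1 with h1 | h1
    · have hdm : d % 3 = 0 := by omega
      have h3 : (2 * d) / 3 = 2 * (d / 3) := by omega
      have hng : ¬ Good (2 * (d/3)) := ih (d/3) (by omega) (by omega) (good_div3 h)
      exact hng (h3 ▸ good_div3 hg)
    · have hdm : d % 3 = 1 := by have := good_mod h; omega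
      have h2 : (2 * d) % 3 = 2 := by omega
      have := good_mod hg
      omega

lemma good_add_eq_double {c : ℕ} (hc : Good c) : ∀ a b, Good a → Good b →
    a + b = 2 * c → a = c ∧ b = c := by
  induction c using Nat.strong_induction_on with
  | _ c ih =>
    intro a b ha hb h
    rcases Nat.eq_zero_or_pos c with rfl | hc0
    · omega
    have hra := good_mod ha
    have hrb := good_mod hb
    have hrc := good_mod hc
    have hmod : a % 3 + b % 3 = 2 * (c % 3) := by omega
    have hdiv : a / 3 + b / 3 = 2 * (c / 3) := by omega
    have := ih (c/3) (by omega) (good_div3 hc) (a/3) (b/3) (good_div3 ha) (good_div3 hb) hdiv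
    omega

lemma good_decompose : ∀ m δ, δ < 3^m →
    ∃ a b, Good a ∧ Good b ∧ a < 3^m ∧ b < 3^m ∧ a + b = δ := by
  intro m
  induction m with
  | zero => intro δ h; exact ⟨0, 0, good_zero, good_zero, by omega, by omega, by omega⟩
  | succ m ih =>
    intro δ h
    have h3 : (3:ℕ)^(m+1) = 3 * 3^m := by ring
    obtain ⟨a, b, hga, hgb, hla, hlb, hab⟩ := ih (δ / 3) (by omega)
    have h1 : (0:ℕ) < 3^m := Nat.pow_pos (n := m) (by norm_num)
    have hr3 : δ % 3 < 3 := Nat.mod_lt δ (by norm_num)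
    interval_cases h : δ % 3
    · exact ⟨3*a+0, 3*b+0, good_mul3_add hga (by norm_num), good_mul3_add hgb (by norm_num),
        by omega, by omega, by omega⟩
    · exact ⟨3*a+1, 3*b+0, good_mul3_add hga (by norm_num), good_mul3_add hgb (by norm_num),
        by omega, by omega, by omega⟩
    · exact ⟨3*a+1, 3*b+1, good_mul3_add hga (by norm_num), good_mul3_add hgb (by norm_num),
        by omega, by omega, by omega⟩

---------------------------------------------------------------------------
-- general chromatic number lemmas
namespace OrientedGraph

set_option linter.unusedSectionVars false
variable {V : Type} [Fintype V] [DecidableEq V]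

/-- any injective function into `Fin k` is a coloring -/
lemma isColoring_of_injective (G : OrientedGraph V) {k : ℕ} (φ : V → Fin k)
    (hφ : Function.Injective φ) : G.IsColoring φ := by
  constructor
  · intro x y hxy h
    exact G.irrefl x (hφ h ▸ hxy)
  · intro x y u v hxy huv hxv hyu
    have hx : x = v := hφ hxv
    have hy : y = u := hφ hyu
    subst hx; subst hy
    exact G.antisymm _ _ hxy huv

lemma exists_id_coloring (G : OrientedGraph V) :
    ∃ φ : V → Fin (Fintype.card V), G.IsColoring φ :=
  ⟨Fintype.equivFin V, G.isColoring_of_injective _ (Fintype.equivFin V).injective⟩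

lemma coloring_mono (G : OrientedGraph V) {k k' : ℕ} (h : k ≤ k') (φ : V → Fin k)
    (hφ : G.IsColoring φ) : ∃ ψ : V → Fin k', G.IsColoring ψ := by
  refine ⟨fun v => Fin.castLE h (φ v), ?_, ?_⟩
  · intro x y hxy hc
    exact hφ.1 x y hxy (Fin.castLE_injective h hc)
  · intro x y u v hxy huv hc
    intro hc2
    exact hφ.2 x y u v hxy huv (Fin.castLE_injective h hc) (Fin.castLE_injective h hc2)

lemma chromNum_le (G : OrientedGraph V) {k : ℕ} (h : ∃ φ : V → Fin k, G.IsColoring φ) :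
    G.chromNum ≤ k := Nat.sInf_le h

lemma chromNum_le_card (G : OrientedGraph V) : G.chromNum ≤ Fintype.card V :=
  G.chromNum_le G.exists_id_coloring

lemma exists_chromNum_coloring (G : OrientedGraph V) :
    ∃ φ : V → Fin G.chromNum, G.IsColoring φ :=
  Nat.sInf_mem (s := {k : ℕ | ∃ φ : V → Fin k, G.IsColoring φ}) ⟨_, G.exists_id_coloring⟩

/-- the 2-dipath criterion for absolute cliques -/
lemma isAbsoluteClique_of (G : OrientedGraph V)
    (h : ∀ u v : V, u ≠ v → G.adj u v ∨ G.adj v u ∨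
      (∃ w, G.adj u w ∧ G.adj w v) ∨ (∃ w, G.adj v w ∧ G.adj w u)) :
    G.IsAbsoluteClique := by
  have hcard : ∀ k ∈ {k : ℕ | ∃ φ : V → Fin k, G.IsColoring φ}, Fintype.card V ≤ k := by
    rintro k ⟨φ, hφ⟩
    have hinj : Function.Injective φ := by
      intro u v huv
      by_contra hne
      rcases h u v hne with h1 | h1 | ⟨w, h1, h2⟩ | ⟨w, h1, h2⟩
      · exact hφ.1 u v h1 huv
      · exact hφ.1 v u h1 huv.symm
      · exact hφ.2 u w w v h1 h2 huv rfl
      · exact hφ.2 v w w u h1 h2 huv.symm rfl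
    simpa using Fintype.card_le_of_injective φ hinj
  have h1 : G.chromNum ≤ Fintype.card V := G.chromNum_le_card
  have h2 : Fintype.card V ≤ G.chromNum :=
    le_csInf ⟨_, G.exists_id_coloring⟩ hcard
  rw [IsAbsoluteClique, Nat.card_eq_fintype_card]
  omega

lemma exists_coloring_insert (G : OrientedGraph V) {x y : V} (hxy : G.adj x y)
    {k : ℕ} (φ : V → Fin k) (hφ : (G.deleteArc x y).IsColoring φ) :
    ∃ ψ : V → Fin (k+2), G.IsColoring ψ := by
  classical
  have hxny : x ≠ y := fun h => G.irrefl x (h ▸ hxy)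
  set ψ : V → Fin (k+2) := fun v => if v = x then ⟨k, by omega⟩ else if v = y then ⟨k+1, by omega⟩
    else Fin.castLE (by omega) (φ v) with hψ
  have hchar : ∀ u v, ψ u = ψ v →
      (u = x ∧ v = x) ∨ (u = y ∧ v = y) ∨
      (u ≠ x ∧ u ≠ y ∧ v ≠ x ∧ v ≠ y ∧ φ u = φ v) := by
    intro u v h
    by_cases h1 : u = x
    · subst h1
      left
      refine ⟨rfl, ?_⟩
      by_contra h2
      by_cases h3 : v = y
      · rw [hψ] at h; simp only [if_pos rfl, h3, if_neg hxny.symm, if_pos rfl] at h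
        have := congrArg Fin.val h; simp at this
      · rw [hψ] at h; simp only [if_pos rfl, if_neg h2, if_neg h3] at h
        have := congrArg Fin.val h; simp at this
        have := (φ v).2; omega
    by_cases h2 : u = y
    · subst h2
      right; left
      refine ⟨rfl, ?_⟩
      by_contra h3
      by_cases h4 : v = x
      · rw [hψ] at h; simp only [if_neg h1, if_pos rfl, h4] at h
        have := congrArg Fin.val h; simp at this
      · rw [hψ] at h; simp only [if_neg h1, if_pos rfl, if_neg h4, if_neg h3] at h
        have := congrArg Fin.val h; simp at this
        have := (φ v).2; omega
    · right; right
      have h3 : v ≠ x := by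
        intro h4; subst h4
        rw [hψ] at h; simp only [if_neg h1, if_neg h2, if_pos rfl] at h
        have := congrArg Fin.val h; simp at this
        have := (φ u).2; omega
      have h4 : v ≠ y := by
        intro h5; subst h5
        rw [hψ] at h; simp only [if_neg h1, if_neg h2, if_neg h3, if_pos rfl] at h
        have := congrArg Fin.val h; simp at this
        have := (φ u).2; omega
      refine ⟨h1, h2, h3, h4, ?_⟩
      rw [hψ] at h; simp only [if_neg h1, if_neg h2, if_neg h3, if_neg h4] at h
      exact Fin.castLE_injective _ h
  refine ⟨ψ, ?_, ?_⟩
  · -- condition (i)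
    intro u v huv hc
    rcases hchar u v hc with ⟨rfl, rfl⟩ | ⟨rfl, rfl⟩ | ⟨h1, h2, h3, h4, h5⟩
    · exact G.irrefl _ huv
    · exact G.irrefl _ huv
    · exact hφ.1 u v ⟨huv, fun h => h1 h.1⟩ h5
  · -- condition (ii)
    intro a b c d hab hcd had hbc
    rcases hchar a d had with ⟨rfl, rfl⟩ | ⟨rfl, rfl⟩ | ⟨ha1, ha2, hd1, hd2, hval⟩
    · rcases hchar b c hbc with ⟨rfl, rfl⟩ | ⟨rfl, rfl⟩ | ⟨hb1, hb2, hc1, hc2, hval2⟩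
      · exact G.irrefl _ hab
      · exact G.antisymm _ _ hab hcd
      · exact hφ.2 _ _ _ _ ⟨hab, fun h => hb2 h.2⟩ ⟨hcd, fun h => hxny h.2⟩ rfl hval2
    · rcases hchar b c hbc with ⟨rfl, rfl⟩ | ⟨rfl, rfl⟩ | ⟨hb1, hb2, hc1, hc2, hval2⟩
      · exact G.antisymm _ _ hab hcd
      · exact G.irrefl _ hab
      · exact hφ.2 _ _ _ _ ⟨hab, fun h => hxny h.1.symm⟩ ⟨hcd, fun h => hc1 h.1⟩ rfl hval2
    · rcases hchar b c hbc with ⟨rfl, rfl⟩ | ⟨rfl, rfl⟩ | ⟨hb1, hb2, hc1, hc2, hval2⟩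
      · exact hφ.2 _ _ _ _ ⟨hab, fun h => ha1 h.1⟩ ⟨hcd, fun h => hd2 h.2⟩ hval rfl
      · exact hφ.2 _ _ _ _ ⟨hab, fun h => ha1 h.1⟩ ⟨hcd, fun h => hd2 h.2⟩ hval rfl
      · exact hφ.2 _ _ _ _ ⟨hab, fun h => ha1 h.1⟩ ⟨hcd, fun h => hc1 h.1⟩ hval hval2

/-- removing an arc decreases the chromatic number by at most 2 -/
lemma chromNum_le_deleteArc_add_two (G : OrientedGraph V) {x y : V} (hxy : G.adj x y) :
    G.chromNum ≤ (G.deleteArc x y).chromNum + 2 := by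
  obtain ⟨φ, hφ⟩ := (G.deleteArc x y).exists_chromNum_coloring
  exact G.chromNum_le (G.exists_coloring_insert hxy φ hφ)

/-- a coloring from a function with small range -/
lemma exists_coloring_of_fun {W : Type} [Fintype W] [DecidableEq W]
    (G : OrientedGraph V) (ψ : V → W) {k : ℕ} {T : Finset W}
    (hT : ∀ v, ψ v ∈ T) (hk : T.card ≤ k)
    (h1 : ∀ x y, G.adj x y → ψ x ≠ ψ y)
    (h2 : ∀ x y u v, G.adj x y → G.adj u v → ψ x = ψ v → ψ y ≠ ψ u) :
    ∃ φ : V → Fin k, G.IsColoring φ := by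
  have hcard : Fintype.card T ≤ Fintype.card (Fin k) := by
    simpa using hk
  obtain ⟨e⟩ := Function.Embedding.nonempty_of_card_le hcard
  refine ⟨fun v => e ⟨ψ v, hT v⟩, ?_, ?_⟩
  · intro x y hxy h
    exact h1 x y hxy (by simpa using Subtype.ext_iff.mp (e.injective h))
  · intro x y u v hxy huv ha hb
    exact h2 x y u v hxy huv (by simpa using Subtype.ext_iff.mp (e.injective ha))
      (by simpa using Subtype.ext_iff.mp (e.injective hb))

end OrientedGraph

---------------------------------------------------------------------------
section Circulant

open OrientedGraph

variable (m : ℕ)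

/-- the connection set -/
def Sset : Set (ZMod (2*3^m-1)) := {k | k.val ≠ 0 ∧ Good k.val ∧ k.val < 3^m}

lemma hM3 (hm : 1 ≤ m) : 3 ≤ 3^m := by
  calc (3:ℕ) = 3^1 := by norm_num
  _ ≤ 3^m := Nat.pow_le_pow_right (by norm_num) hm

lemma neZero_n (hm : 1 ≤ m) : NeZero (2*3^m-1) := ⟨by have := hM3 m hm; omega⟩


lemma mem_S_val {d : ZMod (2*3^m-1)} (hd : d ∈ Sset m) :
    0 < d.val ∧ Good d.val ∧ d.val < 3^m ∧ 2 * d.val < 3^m := by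
  obtain ⟨h1, h2, h3⟩ := hd
  exact ⟨Nat.pos_of_ne_zero h1, h2, h3, good_double_bound h2 m h3⟩

lemma not_mem_S_of_big {z : ZMod (2*3^m-1)} (hz : 3^m ≤ 2 * z.val) : z ∉ Sset m := by
  intro h
  have := (mem_S_val m h).2.2.2
  omega

lemma S_antisymm (hm : 1 ≤ m) : ∀ k : ZMod (2*3^m-1), k ∈ Sset m → -k ∉ Sset m := by
  haveI := neZero_n m hm
  intro k hk
  obtain ⟨h1, h2, h3, h4⟩ := mem_S_val m hk
  apply not_mem_S_of_big m
  rw [ZMod.neg_val, if_neg (by intro h; rw [h] at h1; simp [ZMod.val_zero] at h1)]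
  have := hM3 m hm
  omega

/-- the circulant graph -/
def Gm (hm : 1 ≤ m) : OrientedGraph (ZMod (2*3^m-1)) := circulant _ (Sset m) (S_antisymm m hm)

lemma Gm_adj {u v : ZMod (2*3^m-1)} : (Gm m hm).adj u v ↔ v - u ∈ Sset m := Iff.rfl

-- val arithmetic for members
lemma val_add_S (hm : 1 ≤ m) {s t : ZMod (2*3^m-1)} (hs : s ∈ Sset m) (ht : t ∈ Sset m) :
    (s + t).val = s.val + t.val := by
  haveI := neZero_n m hm
  obtain ⟨h1, h2, h3, h4⟩ := mem_S_val m hs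
  obtain ⟨h1', h2', h3', h4'⟩ := mem_S_val m ht
  apply ZMod.val_add_of_lt
  have := hM3 m hm
  omega

lemma sum_ne_zero (hm : 1 ≤ m) {s t : ZMod (2*3^m-1)} (hs : s ∈ Sset m) (ht : t ∈ Sset m) :
    s + t ≠ 0 := by
  haveI := neZero_n m hm
  intro h
  have h2 := val_add_S m hm hs ht
  rw [h] at h2
  simp only [ZMod.val_zero] at h2
  have := (mem_S_val m hs).1
  omega

lemma zero_not_mem_S (hm : 1 ≤ m) : (0 : ZMod (2*3^m-1)) ∉ Sset m := by
  haveI := neZero_n m hm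
  intro h
  have := (mem_S_val m h).1
  simp only [ZMod.val_zero] at this
  omega

end Circulant

section Circulant2

open OrientedGraph

variable (m : ℕ)

lemma val_inj {a b : ZMod (2*3^m-1)} (hm : 1 ≤ m) (h : a.val = b.val) : a = b := by
  haveI := neZero_n m hm
  exact ZMod.val_injective _ h

-- facts about d ∈ S
section dFacts
variable (hm : 1 ≤ m) {d : ZMod (2*3^m-1)} (hd : d ∈ Sset m)
include hm hd

lemma val_2d : (d + d).val = 2 * d.val := by
  haveI := neZero_n m hm
  rw [ZMod.val_add_of_lt]
  · ring
  · obtain ⟨h1, h2, h3, h4⟩ := mem_S_val m hd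
    have := hM3 m hm
    omega

lemma val_3d : (d + d + d).val = 3 * d.val := by
  haveI := neZero_n m hm
  rw [ZMod.val_add_of_lt, val_2d m hm hd]
  · ring
  · rw [val_2d m hm hd]
    obtain ⟨h1, h2, h3, h4⟩ := mem_S_val m hd
    have := hM3 m hm
    omega

lemma ne_2d : d + d ≠ 0 := by
  haveI := neZero_n m hm
  intro h
  have h2 := val_2d m hm hd
  rw [h] at h2
  simp only [ZMod.val_zero] at h2
  have := (mem_S_val m hd).1
  omega

lemma ne_3d : d + d + d ≠ 0 := by
  haveI := neZero_n m hm
  intro h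
  have h2 := val_3d m hm hd
  rw [h] at h2
  simp only [ZMod.val_zero] at h2
  have := (mem_S_val m hd).1
  omega

lemma ne_d : d ≠ 0 := by
  intro h
  exact zero_not_mem_S m hm (h ▸ hd)

lemma not_mem_2d : d + d ∉ Sset m := by
  intro h
  have h2 := (mem_S_val m h).2.1
  rw [val_2d m hm hd] at h2
  obtain ⟨h3, h4, -, -⟩ := mem_S_val m hd
  exact not_good_double h3 h4 h2

lemma not_mem_neg_d : -d ∉ Sset m := by
  haveI := neZero_n m hm
  apply not_mem_S_of_big
  rw [ZMod.neg_val, if_neg (ne_d m hm hd)]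
  obtain ⟨h1, h2, h3, h4⟩ := mem_S_val m hd
  have := hM3 m hm
  omega

lemma not_mem_neg_2d : -(d + d) ∉ Sset m := by
  haveI := neZero_n m hm
  apply not_mem_S_of_big
  rw [ZMod.neg_val, if_neg (ne_2d m hm hd), val_2d m hm hd]
  obtain ⟨h1, h2, h3, h4⟩ := mem_S_val m hd
  have := hM3 m hm
  omega

lemma not_mem_neg_3d : -(d + d + d) ∉ Sset m := by
  haveI := neZero_n m hm
  apply not_mem_S_of_big
  rw [ZMod.neg_val, if_neg (ne_3d m hm hd), val_3d m hm hd]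
  obtain ⟨h1, h2, h3, h4⟩ := mem_S_val m hd
  have := hM3 m hm
  omega

lemma sum_eq_2d {s t : ZMod (2*3^m-1)} (hs : s ∈ Sset m) (ht : t ∈ Sset m)
    (h : s + t = d + d) : s = d ∧ t = d := by
  haveI := neZero_n m hm
  have hv : s.val + t.val = 2 * d.val := by
    rw [← val_add_S m hm hs ht, h, val_2d m hm hd]
  obtain ⟨h1, h2⟩ := good_add_eq_double (mem_S_val m hd).2.1 s.val t.val
    (mem_S_val m hs).2.1 (mem_S_val m ht).2.1 hv
  exact ⟨val_inj m hm h1, val_inj m hm h2⟩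

lemma sum_ne_neg_2d {s t : ZMod (2*3^m-1)} (hs : s ∈ Sset m) (ht : t ∈ Sset m) :
    s + t ≠ -(d + d) := by
  haveI := neZero_n m hm
  intro h
  have hv := congrArg ZMod.val h
  rw [val_add_S m hm hs ht, ZMod.neg_val, if_neg (ne_2d m hm hd), val_2d m hm hd] at hv
  obtain ⟨h1, h2, h3, h4⟩ := mem_S_val m hd
  obtain ⟨h1', -, -, h4'⟩ := mem_S_val m hs
  obtain ⟨h1'', -, -, h4''⟩ := mem_S_val m ht
  have := hM3 m hm
  omega

end dFacts

/-- decomposition for the absolute clique property -/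
lemma S_decompose (hm : 1 ≤ m) {δ : ZMod (2*3^m-1)} (hδ0 : δ ≠ 0) (hδ : δ.val < 3^m) :
    δ ∈ Sset m ∨ ∃ s t, s ∈ Sset m ∧ t ∈ Sset m ∧ s + t = δ := by
  haveI := neZero_n m hm
  obtain ⟨a, b, hga, hgb, hla, hlb, hab⟩ := good_decompose m δ.val hδ
  have hMn : 3^m < 2*3^m-1 := by have := hM3 m hm; omega
  have hcast : ∀ c : ℕ, c < 3^m → ((c : ZMod (2*3^m-1))).val = c := by
    intro c hc
    apply ZMod.val_cast_of_lt
    omega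
  have hδv : ((δ.val : ℕ) : ZMod (2*3^m-1)) = δ := by
    simp [ZMod.natCast_val, ZMod.cast_id]
  rcases Nat.eq_zero_or_pos a with rfl | ha0
  · left
    refine ⟨?_, ?_, ?_⟩
    · simpa using (ZMod.val_eq_zero δ).not.mpr hδ0
    · rw [show δ.val = b by omega]; exact hgb
    · omega
  rcases Nat.eq_zero_or_pos b with rfl | hb0
  · left
    refine ⟨?_, ?_, ?_⟩
    · simpa using (ZMod.val_eq_zero δ).not.mpr hδ0
    · rw [show δ.val = a by omega]; exact hga
    · omega
  · right
    refine ⟨(a : ZMod (2*3^m-1)), (b : ZMod (2*3^m-1)), ⟨?_, ?_, ?_⟩, ⟨?_, ?_, ?_⟩, ?_⟩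
    · rw [hcast a hla]; omega
    · rw [hcast a hla]; exact hga
    · rw [hcast a hla]; exact hla
    · rw [hcast b hlb]; omega
    · rw [hcast b hlb]; exact hgb
    · rw [hcast b hlb]; exact hlb
    · rw [← Nat.cast_add, hab, hδv]

end Circulant2

section Clique

open OrientedGraph

variable (m : ℕ)

lemma Gm_clique (hm : 1 ≤ m) : (Gm m hm).IsAbsoluteClique := by
  haveI := neZero_n m hm
  apply isAbsoluteClique_of
  intro u v huv
  have hδ0 : v - u ≠ 0 := sub_ne_zero.mpr (Ne.symm huv)
  by_cases hcase : (v - u).val < 3^m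
  · rcases S_decompose m hm hδ0 hcase with h | ⟨s, t, hs, ht, hst⟩
    · exact Or.inl h
    · refine Or.inr (Or.inr (Or.inl ⟨u + s, ?_, ?_⟩))
      · show (u + s) - u ∈ Sset m
        rwa [show u + s - u = s by ring]
      · show v - (u + s) ∈ Sset m
        rwa [show v - (u + s) = t by linear_combination -hst]
  · have hδ0' : u - v ≠ 0 := sub_ne_zero.mpr huv
    have hval : (u - v).val < 3^m := by
      have h1 : u - v = -(v - u) := by ring
      rw [h1, ZMod.neg_val, if_neg hδ0]
      have h2 := ZMod.val_lt (v - u)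
      have := hM3 m hm
      omega
    rcases S_decompose m hm hδ0' hval with h | ⟨s, t, hs, ht, hst⟩
    · exact Or.inr (Or.inl h)
    · refine Or.inr (Or.inr (Or.inr ⟨v + s, ?_, ?_⟩))
      · show (v + s) - v ∈ Sset m
        rwa [show v + s - v = s by ring]
      · show u - (v + s) ∈ Sset m
        rwa [show u - (v + s) = t by linear_combination -hst]

end Clique

---------------------------------------------------------------------------
section Transport

namespace OrientedGraph

variable {V W : Type}

lemma ext_adj {G H : OrientedGraph V} (h : G.adj = H.adj) : G = H := by
  cases G; cases H; simp_all

def mapEquiv (e : V ≃ W) (G : OrientedGraph V) : OrientedGraph W where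
  adj a b := G.adj (e.symm a) (e.symm b)
  irrefl a := G.irrefl (e.symm a)
  antisymm a b h := G.antisymm (e.symm a) (e.symm b) h

lemma mapEquiv_chromNum (e : V ≃ W) (G : OrientedGraph V) :
    (mapEquiv e G).chromNum = G.chromNum := by
  unfold chromNum
  congr 1
  ext k
  constructor
  · rintro ⟨φ, h1, h2⟩
    refine ⟨fun v => φ (e v), ?_, ?_⟩
    · intro x y hxy
      exact h1 (e x) (e y) (by simpa [mapEquiv] using hxy)
    · intro x y u v hxy huv
      exact h2 (e x) (e y) (e u) (e v) (by simpa [mapEquiv] using hxy)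
        (by simpa [mapEquiv] using huv)
  · rintro ⟨φ, h1, h2⟩
    refine ⟨fun w => φ (e.symm w), ?_, ?_⟩
    · intro x y hxy
      exact h1 (e.symm x) (e.symm y) hxy
    · intro x y u v hxy huv
      exact h2 (e.symm x) (e.symm y) (e.symm u) (e.symm v) hxy huv

lemma mapEquiv_deleteArc (e : V ≃ W) (G : OrientedGraph V) (x y : V) :
    (mapEquiv e G).deleteArc (e x) (e y) = mapEquiv e (G.deleteArc x y) := by
  apply ext_adj
  ext a b
  show (G.adj (e.symm a) (e.symm b) ∧ ¬(a = e x ∧ b = e y)) ↔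
    (G.adj (e.symm a) (e.symm b) ∧ ¬(e.symm a = x ∧ e.symm b = y))
  have h1 : a = e x ↔ e.symm a = x := by
    constructor
    · intro h; rw [h]; simp
    · intro h; rw [← h]; simp
  have h2 : b = e y ↔ e.symm b = y := by
    constructor
    · intro h; rw [h]; simp
    · intro h; rw [← h]; simp
  rw [h1, h2]

lemma mapEquiv_dcc (e : V ≃ W) (G : OrientedGraph V) (h : G.IsDeeplyCriticalClique) :
    (mapEquiv e G).IsDeeplyCriticalClique := by
  obtain ⟨hcrit, hcl⟩ := h
  constructor
  · intro a b hab
    have hab' : G.adj (e.symm a) (e.symm b) := hab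
    have := hcrit _ _ hab'
    have hea : e (e.symm a) = a := by simp
    have heb : e (e.symm b) = b := by simp
    rw [← hea, ← heb, mapEquiv_deleteArc, mapEquiv_chromNum, mapEquiv_chromNum, this]
  · unfold IsAbsoluteClique at *
    rw [mapEquiv_chromNum, hcl, Nat.card_congr e]

end OrientedGraph

end Transport

section Deletion

open OrientedGraph

variable (m : ℕ)

lemma Gm_delete (hm : 1 ≤ m) (x : ZMod (2*3^m-1)) {d : ZMod (2*3^m-1)} (hd : d ∈ Sset m) :
    ∃ φ : ZMod (2*3^m-1) → Fin (2*3^m-1-2),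
      ((Gm m hm).deleteArc x (x+d)).IsColoring φ := by
  haveI := neZero_n m hm
  classical
  have hd0 : d ≠ 0 := ne_d m hm hd
  have h2d : d + d ≠ 0 := ne_2d m hm hd
  have h3d : d + d + d ≠ 0 := ne_3d m hm hd
  have hne1 : x ≠ x+d+d := fun h => h2d (by linear_combination -h)
  have hne2 : x ≠ x-d := fun h => hd0 (by linear_combination h)
  have hne3 : x+d ≠ x+d+d := fun h => hd0 (by linear_combination -h)
  have hne4 : x+d ≠ x-d := fun h => h2d (by linear_combination h)
  have hne5 : x+d+d ≠ x-d := fun h => h3d (by linear_combination h)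
  have hne6 : x ≠ x+d := fun h => hd0 (by linear_combination -h)
  set ψ : ZMod (2*3^m-1) → ZMod (2*3^m-1) :=
    fun v => if v = x+d+d then x else if v = x-d then x+d else v with hψ
  have hvA : ∀ v, v = x+d+d → ψ v = x := by
    intro v h; simp only [hψ]; rw [if_pos h]
  have hvB : ∀ v, v ≠ x+d+d → v = x-d → ψ v = x+d := by
    intro v h1 h2; simp only [hψ]; rw [if_neg h1, if_pos h2]
  have hvC : ∀ v, v ≠ x+d+d → v ≠ x-d → ψ v = v := by
    intro v h1 h2; simp only [hψ]; rw [if_neg h1, if_neg h2]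
  have hchar : ∀ a b, ψ a = ψ b → a = b ∨ (a = x ∧ b = x+d+d) ∨ (a = x+d+d ∧ b = x)
      ∨ (a = x+d ∧ b = x-d) ∨ (a = x-d ∧ b = x+d) := by
    intro a b h
    by_cases ha1 : a = x+d+d
    · rw [hvA a ha1] at h
      by_cases hb1 : b = x+d+d
      · exact Or.inl (ha1.trans hb1.symm)
      by_cases hb2 : b = x-d
      · rw [hvB b hb1 hb2] at h; exact absurd h hne6
      · rw [hvC b hb1 hb2] at h
        exact Or.inr (Or.inr (Or.inl ⟨ha1, h.symm⟩))
    by_cases ha2 : a = x-d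
    · rw [hvB a ha1 ha2] at h
      by_cases hb1 : b = x+d+d
      · rw [hvA b hb1] at h; exact absurd h.symm hne6
      by_cases hb2 : b = x-d
      · exact Or.inl (ha2.trans hb2.symm)
      · rw [hvC b hb1 hb2] at h
        exact Or.inr (Or.inr (Or.inr (Or.inr ⟨ha2, h.symm⟩)))
    · rw [hvC a ha1 ha2] at h
      by_cases hb1 : b = x+d+d
      · rw [hvA b hb1] at h; exact Or.inr (Or.inl ⟨h, hb1⟩)
      by_cases hb2 : b = x-d
      · rw [hvB b hb1 hb2] at h; exact Or.inr (Or.inr (Or.inr (Or.inl ⟨h, hb2⟩)))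
      · rw [hvC b hb1 hb2] at h; exact Or.inl h
  -- the target finset
  refine exists_coloring_of_fun _ ψ
    (T := (Finset.univ.erase (x+d+d)).erase (x-d)) ?_ ?_ ?_ ?_
  · -- range
    intro v
    rw [Finset.mem_erase, Finset.mem_erase]
    by_cases h1 : v = x+d+d
    · rw [hvA v h1]; exact ⟨hne2, hne1, Finset.mem_univ _⟩
    by_cases h2 : v = x-d
    · rw [hvB v h1 h2]; exact ⟨hne4, hne3, Finset.mem_univ _⟩
    · rw [hvC v h1 h2]; exact ⟨h2, h1, Finset.mem_univ _⟩
  · -- card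
    rw [Finset.card_erase_of_mem (Finset.mem_erase.mpr ⟨hne5.symm, Finset.mem_univ _⟩),
      Finset.card_erase_of_mem (Finset.mem_univ _), Finset.card_univ, ZMod.card]
    omega
  · -- condition (i)
    intro u v huv heq
    obtain ⟨hs1, hdel1⟩ := huv
    replace hs1 : v - u ∈ Sset m := hs1
    rcases hchar u v heq with h | ⟨hu, hv⟩ | ⟨hu, hv⟩ | ⟨hu, hv⟩ | ⟨hu, hv⟩
    · rw [h, sub_self] at hs1
      exact zero_not_mem_S m hm hs1
    · have hsv : v - u = d + d := by rw [hu, hv]; ring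
      exact not_mem_2d m hm hd (hsv ▸ hs1)
    · have hsv : v - u = -(d + d) := by rw [hu, hv]; ring
      exact not_mem_neg_2d m hm hd (hsv ▸ hs1)
    · have hsv : v - u = -(d + d) := by rw [hu, hv]; ring
      exact not_mem_neg_2d m hm hd (hsv ▸ hs1)
    · have hsv : v - u = d + d := by rw [hu, hv]; ring
      exact not_mem_2d m hm hd (hsv ▸ hs1)
  · -- condition (ii)
    intro u₁ v₁ u₂ v₂ harc1 harc2 hA hB

    obtain ⟨hs1, hdel1⟩ := harc1
    obtain ⟨hs2, hdel2⟩ := harc2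
    replace hs1 : v₁ - u₁ ∈ Sset m := hs1
    replace hs2 : v₂ - u₂ ∈ Sset m := hs2
    rcases hchar _ _ hA with c1 | ⟨hu, hz⟩ | ⟨hu, hz⟩ | ⟨hu, hz⟩ | ⟨hu, hz⟩
    -- c1 : u₁ = v₂
    · rcases hchar _ _ hB with c2 | ⟨hv, hw⟩ | ⟨hv, hw⟩ | ⟨hv, hw⟩ | ⟨hv, hw⟩
      · -- (1) antisymmetry
        apply S_antisymm m hm (v₁ - u₁) hs1
        have : v₂ - u₂ = -(v₁ - u₁) := by rw [← c1, ← c2]; ring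
        exact this ▸ hs2
      · -- (2)
        exact sum_ne_neg_2d m hm hd hs1 hs2 (by rw [hv, hw, ← c1]; ring)
      · -- (3)
        obtain ⟨hsd, htd⟩ := sum_eq_2d m hm hd hs1 hs2 (by rw [hv, hw, ← c1]; ring)
        exact hdel2 ⟨hw, by linear_combination htd + hw⟩
      · -- (4)
        obtain ⟨hsd, htd⟩ := sum_eq_2d m hm hd hs1 hs2 (by rw [hv, hw, ← c1]; ring)
        exact hdel1 ⟨by linear_combination hv - hsd, hv⟩
      · -- (5)
        exact sum_ne_neg_2d m hm hd hs1 hs2 (by rw [hv, hw, ← c1]; ring)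
    -- c1 : u₁ = x, v₂ = x+d+d
    · rcases hchar _ _ hB with c2 | ⟨hv, hw⟩ | ⟨hv, hw⟩ | ⟨hv, hw⟩ | ⟨hv, hw⟩
      · -- (6)
        obtain ⟨hsd, htd⟩ := sum_eq_2d m hm hd hs1 hs2 (by rw [hu, hz, ← c2]; ring)
        exact hdel1 ⟨hu, by linear_combination hsd + hu⟩
      · -- (8)
        have hsv : v₁ - u₁ = 0 := by rw [hv, hu]; ring
        exact zero_not_mem_S m hm (hsv ▸ hs1)
      · -- (9)
        have hsv : v₁ - u₁ = d + d := by rw [hv, hu]; ring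
        exact not_mem_2d m hm hd (hsv ▸ hs1)
      · -- (10)
        exact hdel1 ⟨hu, hv⟩
      · -- (11)
        have hsv : v₁ - u₁ = -d := by rw [hv, hu]; ring
        exact not_mem_neg_d m hm hd (hsv ▸ hs1)
    -- c1 : u₁ = x+d+d, v₂ = x
    · rcases hchar _ _ hB with c2 | ⟨hv, hw⟩ | ⟨hv, hw⟩ | ⟨hv, hw⟩ | ⟨hv, hw⟩
      · -- (7)
        exact sum_ne_neg_2d m hm hd hs1 hs2 (by rw [hu, hz, ← c2]; ring)
      · -- (12)
        have hsv : v₁ - u₁ = -(d + d) := by rw [hv, hu]; ring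
        exact not_mem_neg_2d m hm hd (hsv ▸ hs1)
      · -- (13)
        have hsv : v₁ - u₁ = 0 := by rw [hv, hu]; ring
        exact zero_not_mem_S m hm (hsv ▸ hs1)
      · -- (14)
        have hsv : v₁ - u₁ = -d := by rw [hv, hu]; ring
        exact not_mem_neg_d m hm hd (hsv ▸ hs1)
      · -- (15)
        have hsv : v₁ - u₁ = -(d + d + d) := by rw [hv, hu]; ring
        exact not_mem_neg_3d m hm hd (hsv ▸ hs1)
    -- c1 : u₁ = x+d, v₂ = x-d
    · rcases hchar _ _ hB with c2 | ⟨hv, hw⟩ | ⟨hv, hw⟩ | ⟨hv, hw⟩ | ⟨hv, hw⟩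
      · -- (16)
        exact sum_ne_neg_2d m hm hd hs1 hs2 (by rw [hu, hz, ← c2]; ring)
      · -- (18)
        have hsv : v₁ - u₁ = -d := by rw [hv, hu]; ring
        exact not_mem_neg_d m hm hd (hsv ▸ hs1)
      · -- (19)
        have htv : v₂ - u₂ = -d := by rw [hz, hw]; ring
        exact not_mem_neg_d m hm hd (htv ▸ hs2)
      · -- (20)
        have hsv : v₁ - u₁ = 0 := by rw [hv, hu]; ring
        exact zero_not_mem_S m hm (hsv ▸ hs1)
      · -- (21)
        have hsv : v₁ - u₁ = -(d + d) := by rw [hv, hu]; ring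
        exact not_mem_neg_2d m hm hd (hsv ▸ hs1)
    -- c1 : u₁ = x-d, v₂ = x+d
    · rcases hchar _ _ hB with c2 | ⟨hv, hw⟩ | ⟨hv, hw⟩ | ⟨hv, hw⟩ | ⟨hv, hw⟩
      · -- (17)
        obtain ⟨hsd, htd⟩ := sum_eq_2d m hm hd hs1 hs2 (by rw [hu, hz, ← c2]; ring)
        exact hdel2 ⟨by linear_combination hz - htd, hz⟩
      · -- (22)
        have htv : v₂ - u₂ = -d := by rw [hz, hw]; ring
        exact not_mem_neg_d m hm hd (htv ▸ hs2)
      · -- (23)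
        exact hdel2 ⟨hw, hz⟩
      · -- (24)
        have hsv : v₁ - u₁ = d + d := by rw [hv, hu]; ring
        exact not_mem_2d m hm hd (hsv ▸ hs1)
      · -- (25)
        have hsv : v₁ - u₁ = 0 := by rw [hv, hu]; ring
        exact zero_not_mem_S m hm (hsv ▸ hs1)

end Deletion

section Final

open OrientedGraph

lemma Gm_dcc (m : ℕ) (hm : 1 ≤ m) : (Gm m hm).IsDeeplyCriticalClique := by
  haveI := neZero_n m hm
  have hcl := Gm_clique m hm
  refine ⟨?_, hcl⟩
  intro a b hab
  have hd : b - a ∈ Sset m := hab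
  have hb : a + (b - a) = b := by ring
  have hub : (Gm m hm).chromNum = 2*3^m-1 := by
    rw [IsAbsoluteClique] at hcl
    rw [hcl]
    simp [Nat.card_eq_fintype_card, ZMod.card]
  apply Nat.le_antisymm
  · obtain ⟨φ, hφ⟩ := Gm_delete m hm a hd
    rw [hb] at hφ
    have h1 := chromNum_le _ ⟨φ, hφ⟩
    rw [hub]
    exact h1
  · have h2 := chromNum_le_deleteArc_add_two (Gm m hm) hab
    have h3 := hM3 m hm
    rw [hub] at h2 ⊢
    omega

theorem exists_dcc (m : ℕ) (hm : 1 ≤ m) :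
    ∃ G : OrientedGraph (Fin (2 * 3 ^ m - 1)), G.IsDeeplyCriticalClique := by
  haveI := neZero_n m hm
  exact ⟨mapEquiv (Fintype.equivFinOfCardEq (ZMod.card _)) (Gm m hm),
    mapEquiv_dcc _ _ (Gm_dcc m hm)⟩

end Final

/-- for every `m ≥ 1` there is a deeply critical oriented clique on
`2 * 3 ^ m - 1` vertices. -/
theorem stmt18 (m : ℕ) (hm : 1 ≤ m) :
    ∃ G : OrientedGraph (Fin (2 * 3 ^ m - 1)), G.IsDeeplyCriticalClique := by
  exact exists_dcc m hm
end

section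
/- Let n ≥ 1 be even and let S ⊆ Z_n be such that no k ∈ Z_n satisfies both k ∈ S and −k ∈ S. If the oriented circulant graph C(n,S) is an absolute oriented clique, then n/2 ∉ S and there exist x, y ∈ S with x + y ≡ n/2 (mod n) or x + y ≡ −n/2 (mod n). -/
/-- if `n` is even and the oriented circulant graph `C(n, S)` is an
absolute oriented clique, then `n/2 ∉ S` and there are `x, y ∈ S` with
`x + y ≡ ±n/2 (mod n)`. -/
theorem stmt19 (n : ℕ) (hn : 1 ≤ n) (hev : Even n) (S : Set (ZMod n))
    (hS : ∀ k : ZMod n, k ∈ S → -k ∉ S)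
    (h : (circulant n S hS).IsAbsoluteClique) :
    ((n / 2 : ℕ) : ZMod n) ∉ S ∧
    ∃ x ∈ S, ∃ y ∈ S,
      x + y = ((n / 2 : ℕ) : ZMod n) ∨ x + y = -((n / 2 : ℕ) : ZMod n) := by
  obtain ⟨k, hk⟩ := hev
  have h2n : 2 ≤ n := by omega
  haveI : NeZero n := ⟨by omega⟩
  have hdiv : n / 2 + n / 2 = n := by omega
  set mz : ZMod n := ((n / 2 : ℕ) : ZMod n) with hmz
  have hadd : mz + mz = 0 := by
    rw [hmz, ← Nat.cast_add, hdiv, ZMod.natCast_self]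
  have hneg : -mz = mz := neg_eq_of_add_eq_zero_left hadd
  have h1 : mz ∉ S := fun hm => hS mz hm (by rwa [hneg])
  have h0 : (0 : ZMod n) ∉ S := fun hm => hS 0 hm (by simpa using hm)
  refine ⟨h1, ?_⟩
  by_contra hc
  push_neg at hc
  have hmzval : mz.val = n / 2 := ZMod.val_cast_of_lt (by omega)
  set f : ZMod n → Fin (n - 1) := fun w =>
    ⟨if w.val = n / 2 then 0 else if w.val < n / 2 then w.val else w.val - 1,
      by have := ZMod.val_lt w; split_ifs <;> omega⟩ with hf
  have veq : ∀ a b : ZMod n, a = b ↔ a.val = b.val :=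
    fun a b => ⟨congrArg _, fun hv => ZMod.val_injective n hv⟩
  have hψ : ∀ a b : ZMod n, f a = f b →
      (a = b ∨ (a = 0 ∧ b = mz) ∨ (a = mz ∧ b = 0)) := by
    intro a b hab
    have hva := ZMod.val_lt a
    have hvb := ZMod.val_lt b
    have h0a : (0 : ZMod n).val = 0 := ZMod.val_zero
    rw [hf] at hab
    simp only [Fin.mk.injEq] at hab
    rw [veq a b, veq a 0, veq b mz, veq a mz, veq b 0, h0a, hmzval]
    split_ifs at hab <;> omega
  have hcol : (circulant n S hS).IsColoring f := by
    constructor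
    · intro x y hxy hfe
      have hxy' : y - x ∈ S := hxy
      rcases hψ x y hfe with h' | ⟨hx0, hym⟩ | ⟨hxm, hy0⟩
      · exact h0 (by simpa [h'] using hxy')
      · exact h1 (by simpa [hx0, hym] using hxy')
      · rw [hy0, hxm, zero_sub, hneg] at hxy'; exact h1 hxy'
    · intro x y u v hxy huv hxv hyu
      have hxy' : y - x ∈ S := hxy
      have huv' : v - u ∈ S := huv
      rcases hψ x v hxv with h' | ⟨hx0, hvm⟩ | ⟨hxm, hv0⟩ <;>
        rcases hψ y u hyu with h'' | ⟨hy0, hum⟩ | ⟨hym, hu0⟩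
      · subst h' h''
        exact hS _ hxy' (by rwa [neg_sub])
      · subst h' hy0 hum
        exact (hc _ huv' _ hxy').2 (by ring)
      · subst h' hym hu0
        exact (hc _ huv' _ hxy').1 (by ring)
      · subst hx0 hvm h''
        exact (hc _ hxy' _ huv').1 (by ring)
      · subst hx0 hvm hy0 hum
        exact h0 (by simpa using hxy')
      · subst hx0 hvm hym hu0
        exact h1 (by simpa using hxy')
      · subst hxm hv0 h''
        exact (hc _ hxy' _ huv').2 (by ring)
      · subst hxm hv0 hy0 hum
        rw [zero_sub, hneg] at hxy'; exact h1 hxy'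
      · subst hxm hv0 hym hu0
        exact h0 (by simpa using hxy')
  have hle : (circulant n S hS).chromNum ≤ n - 1 :=
    Nat.sInf_le ⟨f, hcol⟩
  rw [OrientedGraph.IsAbsoluteClique, Nat.card_zmod] at h
  omega
end
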